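/- arXiv:2511.12506 — 4 statements merged into one kernel-verified Lean document; each statement's English description precedes it below -/
import Mathlib

section
/- Let δ ∈ (0, 1/3) and n ≥ 9/(2δ²). Let V1, V2, V3 be pairwise disjoint sets with |V_i| = x_i·n and x_i ≥ 1/3 − δ for each i ∈ [3]. Then ‖C[V1,V2,V3]‖₂ ≥ n⁴/6 − 2δ·n⁴. -/
/-- The cyclic 3-graph `C[V1,V2,V3]`: all triples of types
`V1V2V3`, `V1V1V2`, `V2V2V3`, `V3V3V1`. -/
def cycEdges {α : Type*} [Fintype α] [DecidableEq α] (V1 V2 V3 : Finset α) :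
    Finset (Finset α) :=
  (Finset.powersetCard 3 (Finset.univ : Finset α)).filter fun e =>
    ((e ∩ V1).card, (e ∩ V2).card, (e ∩ V3).card) ∈
      [((1 : ℕ), (1 : ℕ), (1 : ℕ)), (2, 1, 0), (0, 2, 1), (1, 0, 2)]

/-- The ℓ₂-norm of a 3-graph: the sum of squared codegrees over all pairs. -/
def normTwo {α : Type*} [Fintype α] [DecidableEq α] (H : Finset (Finset α)) : ℕ :=
  ∑ e ∈ Finset.powersetCard 2 (Finset.univ : Finset α), ((H.filter fun E => e ⊆ E).card) ^ 2

open Finset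

section Aux

lemma cycEdges_rot {α : Type*} [Fintype α] [DecidableEq α] (V1 V2 V3 : Finset α) :
    cycEdges V1 V2 V3 = cycEdges V2 V3 V1 := by
  unfold cycEdges
  ext e
  simp only [mem_filter, mem_powersetCard, List.mem_cons, List.not_mem_nil, or_false,
    Prod.mk.injEq]
  tauto

lemma pair_inter_of_mem_left {α : Type*} [DecidableEq α] {u v : α} {W : Finset α}
    (hu : u ∈ W) (hv : v ∉ W) :
    ({u, v} : Finset α) ∩ W = {u} := by
  ext x
  simp only [mem_inter, mem_insert, mem_singleton]
  constructor
  · rintro ⟨rfl | rfl, hx⟩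
    · rfl
    · exact absurd hx hv
  · rintro rfl
    exact ⟨Or.inl rfl, hu⟩

lemma pair_inter_of_not_mem {α : Type*} [DecidableEq α] {u v : α} {W : Finset α}
    (hu : u ∉ W) (hv : v ∉ W) :
    ({u, v} : Finset α) ∩ W = ∅ := by
  ext x
  simp only [mem_inter, mem_insert, mem_singleton, notMem_empty, iff_false, not_and]
  rintro (rfl | rfl) <;> assumption

lemma codeg_cross {α : Type*} [Fintype α] [DecidableEq α] {V1 V2 V3 : Finset α}
    (h12 : Disjoint V1 V2) (h13 : Disjoint V1 V3) (h23 : Disjoint V2 V3)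
    {u v : α} (hu : u ∈ V1) (hv : v ∈ V2) :
    V3.card + (V1.card - 1) ≤
      ((cycEdges V1 V2 V3).filter fun E => ({u, v} : Finset α) ⊆ E).card := by
  have hvV1 : v ∉ V1 := disjoint_right.1 h12 hv
  have huV2 : u ∉ V2 := disjoint_left.1 h12 hu
  have huV3 : u ∉ V3 := disjoint_left.1 h13 hu
  have hvV3 : v ∉ V3 := disjoint_left.1 h23 hv
  have huv : u ≠ v := fun h => hvV1 (h ▸ hu)
  have hi1 : ({u, v} : Finset α) ∩ V1 = {u} := pair_inter_of_mem_left hu hvV1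
  have hi2 : ({u, v} : Finset α) ∩ V2 = {v} := by
    rw [pair_comm]; exact pair_inter_of_mem_left hv huV2
  have hi3 : ({u, v} : Finset α) ∩ V3 = ∅ := pair_inter_of_not_mem huV3 hvV3
  have hcard : (V3 ∪ V1.erase u).card = V3.card + (V1.card - 1) := by
    rw [card_union_of_disjoint (Disjoint.mono_right (erase_subset _ _) h13.symm),
      card_erase_of_mem hu]
  rw [← hcard]
  apply Finset.card_le_card_of_injOn (fun w => insert w ({u, v} : Finset α))
  · intro w hw
    simp only [mem_coe, mem_union, mem_erase] at hw
    have hwe : w ∉ ({u, v} : Finset α) := by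
      simp only [mem_insert, mem_singleton]
      rintro (rfl | rfl)
      · rcases hw with h | h
        · exact huV3 h
        · exact h.1 rfl
      · rcases hw with h | h
        · exact hvV3 h
        · exact hvV1 h.2
    simp only [mem_coe, mem_filter]
    refine ⟨?_, subset_insert _ _⟩
    simp only [cycEdges, mem_filter, mem_powersetCard]
    refine ⟨⟨subset_univ _, ?_⟩, ?_⟩
    · rw [card_insert_of_notMem hwe, card_pair huv]
    · rcases hw with hw3 | ⟨hwu, hw1⟩
      · have hwV1 : w ∉ V1 := disjoint_right.1 h13 hw3
        have hwV2 : w ∉ V2 := disjoint_right.1 h23 hw3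
        rw [insert_inter_of_notMem hwV1, insert_inter_of_notMem hwV2,
          insert_inter_of_mem hw3, hi1, hi2, hi3]
        simp
      · have hwV2 : w ∉ V2 := disjoint_left.1 h12 hw1
        have hwV3 : w ∉ V3 := disjoint_left.1 h13 hw1
        rw [insert_inter_of_mem hw1, insert_inter_of_notMem hwV2,
          insert_inter_of_notMem hwV3, hi1, hi2, hi3]
        have : w ∉ ({u} : Finset α) := by simp [hwu]
        simp [card_insert_of_notMem this]
  · intro w hw w' hw' h
    simp only at h
    have hwe : w ∉ ({u, v} : Finset α) := by
      simp only [coe_union, Set.mem_union, mem_coe, mem_erase] at hw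
      simp only [mem_insert, mem_singleton]
      rintro (rfl | rfl)
      · rcases hw with h' | h'
        · exact huV3 h'
        · exact h'.1 rfl
      · rcases hw with h' | h'
        · exact hvV3 h'
        · exact hvV1 h'.2
    have : w ∈ insert w' ({u, v} : Finset α) := h ▸ mem_insert_self w _
    rcases mem_insert.1 this with h' | h'
    · exact h'
    · exact absurd h' hwe

lemma pairMk_injOn {α : Type*} [DecidableEq α] {V1 V2 : Finset α} (h12 : Disjoint V1 V2) :
    ∀ p ∈ V1 ×ˢ V2, ∀ q ∈ V1 ×ˢ V2,
      ({p.1, p.2} : Finset α) = {q.1, q.2} → p = q := by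
  rintro ⟨a, b⟩ hp ⟨c, d⟩ hq h
  simp only [mem_product] at hp hq
  have hc : c ∈ ({a, b} : Finset α) := h ▸ (mem_insert_self _ _)
  have hd : d ∈ ({a, b} : Finset α) := h ▸ (mem_insert.2 (Or.inr (mem_singleton_self _)))
  have hca : c = a := by
    rcases mem_insert.1 hc with h' | h'
    · exact h'
    · exact absurd (mem_singleton.1 h' ▸ hq.1) (disjoint_right.1 h12 hp.2)
  have hdb : d = b := by
    rcases mem_insert.1 hd with h' | h'
    · exact absurd (h' ▸ hq.2) (disjoint_left.1 h12 hp.1)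
    · exact mem_singleton.1 h'
  simp [hca, hdb]

lemma sum_cross {α : Type*} [Fintype α] [DecidableEq α] {V1 V2 V3 : Finset α}
    (h12 : Disjoint V1 V2) (h13 : Disjoint V1 V3) (h23 : Disjoint V2 V3) :
    V1.card * V2.card * (V3.card + (V1.card - 1)) ^ 2 ≤
      ∑ e ∈ (V1 ×ˢ V2).image (fun p => ({p.1, p.2} : Finset α)),
        ((cycEdges V1 V2 V3).filter fun E => e ⊆ E).card ^ 2 := by
  rw [Finset.sum_image (pairMk_injOn h12)]
  have h := Finset.card_nsmul_le_sum (V1 ×ˢ V2)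
    (fun p => ((cycEdges V1 V2 V3).filter fun E => ({p.1, p.2} : Finset α) ⊆ E).card ^ 2)
    ((V3.card + (V1.card - 1)) ^ 2) ?_
  · simpa [card_product, smul_eq_mul] using h
  · rintro ⟨u, v⟩ hp
    simp only [mem_product] at hp
    exact Nat.pow_le_pow_left (codeg_cross h12 h13 h23 hp.1 hp.2) 2

lemma codeg_inside {α : Type*} [Fintype α] [DecidableEq α] {V1 V2 V3 : Finset α}
    (h12 : Disjoint V1 V2) (h13 : Disjoint V1 V3) (h23 : Disjoint V2 V3)
    {e : Finset α} (he : e ∈ powersetCard 2 V1) :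
    V2.card ≤ ((cycEdges V1 V2 V3).filter fun E => e ⊆ E).card := by
  rw [mem_powersetCard] at he
  obtain ⟨hsub, hcard⟩ := he
  have hdV2 : ∀ x ∈ e, x ∉ V2 := fun x hx => disjoint_left.1 h12 (hsub hx)
  have hdV3 : ∀ x ∈ e, x ∉ V3 := fun x hx => disjoint_left.1 h13 (hsub hx)
  have hi1 : e ∩ V1 = e := inter_eq_left.2 hsub
  have hi2 : e ∩ V2 = ∅ := by
    ext x; simp only [mem_inter, notMem_empty, iff_false, not_and]
    exact hdV2 x
  have hi3 : e ∩ V3 = ∅ := by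
    ext x; simp only [mem_inter, notMem_empty, iff_false, not_and]
    exact hdV3 x
  apply Finset.card_le_card_of_injOn (fun w => insert w e)
  · intro w hw
    have hwe : w ∉ e := fun h => hdV2 w h hw
    have hwV1 : w ∉ V1 := disjoint_right.1 h12 hw
    have hwV3 : w ∉ V3 := disjoint_left.1 h23 hw
    simp only [mem_coe, mem_filter]
    refine ⟨?_, subset_insert _ _⟩
    simp only [cycEdges, mem_filter, mem_powersetCard]
    refine ⟨⟨subset_univ _, by rw [card_insert_of_notMem hwe, hcard]⟩, ?_⟩
    rw [insert_inter_of_notMem hwV1, insert_inter_of_mem hw, insert_inter_of_notMem hwV3,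
      hi1, hi2, hi3, hcard]
    simp
  · intro w hw w' hw' h
    simp only at h
    have hwe : w ∉ e := fun h' => hdV2 w h' hw
    have : w ∈ insert w' e := h ▸ mem_insert_self w _
    rcases mem_insert.1 this with h' | h'
    · exact h'
    · exact absurd h' hwe

lemma sum_inside {α : Type*} [Fintype α] [DecidableEq α] {V1 V2 V3 : Finset α}
    (h12 : Disjoint V1 V2) (h13 : Disjoint V1 V3) (h23 : Disjoint V2 V3) :
    V1.card.choose 2 * V2.card ^ 2 ≤
      ∑ e ∈ powersetCard 2 V1,
        ((cycEdges V1 V2 V3).filter fun E => e ⊆ E).card ^ 2 := by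
  have h := Finset.card_nsmul_le_sum (powersetCard 2 V1)
    (fun e => ((cycEdges V1 V2 V3).filter fun E => e ⊆ E).card ^ 2) (V2.card ^ 2) ?_
  · simpa [card_powersetCard, smul_eq_mul] using h
  · intro e he
    exact Nat.pow_le_pow_left (codeg_inside h12 h13 h23 he) 2

lemma pat_cross {α : Type*} [Fintype α] [DecidableEq α] {V1 V2 V3 : Finset α}
    (h12 : Disjoint V1 V2) (h13 : Disjoint V1 V3) (h23 : Disjoint V2 V3)
    {e : Finset α} (he : e ∈ (V1 ×ˢ V2).image (fun p => ({p.1, p.2} : Finset α))) :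
    (e ∩ V1).card = 1 ∧ (e ∩ V2).card = 1 ∧ (e ∩ V3).card = 0 ∧ e.card = 2 := by
  simp only [mem_image, mem_product] at he
  obtain ⟨⟨u, v⟩, ⟨hu, hv⟩, rfl⟩ := he
  have hvV1 : v ∉ V1 := disjoint_right.1 h12 hv
  have huV2 : u ∉ V2 := disjoint_left.1 h12 hu
  have huV3 : u ∉ V3 := disjoint_left.1 h13 hu
  have hvV3 : v ∉ V3 := disjoint_left.1 h23 hv
  have huv : u ≠ v := fun h => hvV1 (h ▸ hu)
  refine ⟨?_, ?_, ?_, card_pair huv⟩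
  · rw [pair_inter_of_mem_left hu hvV1]; simp
  · rw [pair_comm, pair_inter_of_mem_left hv huV2]; simp
  · rw [pair_inter_of_not_mem huV3 hvV3]; simp

lemma pat_inside {α : Type*} [Fintype α] [DecidableEq α] {V1 V2 V3 : Finset α}
    (h12 : Disjoint V1 V2) (h13 : Disjoint V1 V3)
    {e : Finset α} (he : e ∈ powersetCard 2 V1) :
    (e ∩ V1).card = 2 ∧ (e ∩ V2).card = 0 ∧ (e ∩ V3).card = 0 ∧ e.card = 2 := by
  rw [mem_powersetCard] at he
  obtain ⟨hsub, hcard⟩ := he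
  refine ⟨by rw [inter_eq_left.2 hsub, hcard], ?_, ?_, hcard⟩
  · rw [show e ∩ V2 = ∅ from ?_]; · simp
    ext x; simp only [mem_inter, notMem_empty, iff_false, not_and]
    exact fun hx => disjoint_left.1 h12 (hsub hx)
  · rw [show e ∩ V3 = ∅ from ?_]; · simp
    ext x; simp only [mem_inter, notMem_empty, iff_false, not_and]
    exact fun hx => disjoint_left.1 h13 (hsub hx)

lemma normTwo_lower {α : Type*} [Fintype α] [DecidableEq α] (V1 V2 V3 : Finset α)
    (h12 : Disjoint V1 V2) (h13 : Disjoint V1 V3) (h23 : Disjoint V2 V3) :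
    V1.card * V2.card * (V3.card + (V1.card - 1)) ^ 2
    + V2.card * V3.card * (V1.card + (V2.card - 1)) ^ 2
    + V3.card * V1.card * (V2.card + (V3.card - 1)) ^ 2
    + V1.card.choose 2 * V2.card ^ 2
    + V2.card.choose 2 * V3.card ^ 2
    + V3.card.choose 2 * V1.card ^ 2
    ≤ normTwo (cycEdges V1 V2 V3) := by
  set H := cycEdges V1 V2 V3 with hH
  have hrot2 : cycEdges V2 V3 V1 = H := (cycEdges_rot V1 V2 V3).symm
  have hrot3 : cycEdges V3 V1 V2 = H := by
    rw [cycEdges_rot V3 V1 V2]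
  set f : Finset α → ℕ := fun e => ((H.filter fun E => e ⊆ E).card) ^ 2 with hf
  set A1 := (V1 ×ˢ V2).image (fun p => ({p.1, p.2} : Finset α)) with hA1
  set A2 := (V2 ×ˢ V3).image (fun p => ({p.1, p.2} : Finset α)) with hA2
  set A3 := (V3 ×ˢ V1).image (fun p => ({p.1, p.2} : Finset α)) with hA3
  set A4 := powersetCard 2 V1 with hA4
  set A5 := powersetCard 2 V2 with hA5
  set A6 := powersetCard 2 V3 with hA6
  -- the six partial sum bounds
  have hS1 : V1.card * V2.card * (V3.card + (V1.card - 1)) ^ 2 ≤ ∑ e ∈ A1, f e :=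
    sum_cross h12 h13 h23
  have hS2 : V2.card * V3.card * (V1.card + (V2.card - 1)) ^ 2 ≤ ∑ e ∈ A2, f e := by
    have := sum_cross (V1 := V2) (V2 := V3) (V3 := V1) h23 h12.symm h13.symm
    rwa [hrot2] at this
  have hS3 : V3.card * V1.card * (V2.card + (V3.card - 1)) ^ 2 ≤ ∑ e ∈ A3, f e := by
    have := sum_cross (V1 := V3) (V2 := V1) (V3 := V2) h13.symm h23.symm h12
    rwa [hrot3] at this
  have hS4 : V1.card.choose 2 * V2.card ^ 2 ≤ ∑ e ∈ A4, f e :=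
    sum_inside h12 h13 h23
  have hS5 : V2.card.choose 2 * V3.card ^ 2 ≤ ∑ e ∈ A5, f e := by
    have := sum_inside (V1 := V2) (V2 := V3) (V3 := V1) h23 h12.symm h13.symm
    rwa [hrot2] at this
  have hS6 : V3.card.choose 2 * V1.card ^ 2 ≤ ∑ e ∈ A6, f e := by
    have := sum_inside (V1 := V3) (V2 := V1) (V3 := V2) h13.symm h23.symm h12
    rwa [hrot3] at this
  -- patterns
  have p1 : ∀ e ∈ A1, (e ∩ V1).card = 1 ∧ (e ∩ V2).card = 1 ∧ (e ∩ V3).card = 0 ∧ e.card = 2 := by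
    intro e he; rw [hA1] at he; exact pat_cross h12 h13 h23 he
  have p2 : ∀ e ∈ A2, (e ∩ V1).card = 0 ∧ (e ∩ V2).card = 1 ∧ (e ∩ V3).card = 1 ∧ e.card = 2 := by
    intro e he
    rw [hA2] at he
    obtain ⟨a, b, c, d⟩ := pat_cross (V1 := V2) (V2 := V3) (V3 := V1) h23 h12.symm h13.symm he
    exact ⟨c, a, b, d⟩
  have p3 : ∀ e ∈ A3, (e ∩ V1).card = 1 ∧ (e ∩ V2).card = 0 ∧ (e ∩ V3).card = 1 ∧ e.card = 2 := by
    intro e he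
    rw [hA3] at he
    obtain ⟨a, b, c, d⟩ := pat_cross (V1 := V3) (V2 := V1) (V3 := V2) h13.symm h23.symm h12 he
    exact ⟨b, c, a, d⟩
  have p4 : ∀ e ∈ A4, (e ∩ V1).card = 2 ∧ (e ∩ V2).card = 0 ∧ (e ∩ V3).card = 0 ∧ e.card = 2 := by
    intro e he; rw [hA4] at he; exact pat_inside (V3 := V3) h12 h13 he
  have p5 : ∀ e ∈ A5, (e ∩ V1).card = 0 ∧ (e ∩ V2).card = 2 ∧ (e ∩ V3).card = 0 ∧ e.card = 2 := by
    intro e he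
    rw [hA5] at he
    obtain ⟨a, b, c, d⟩ := pat_inside (V1 := V2) (V2 := V3) (V3 := V1) h23 h12.symm he
    exact ⟨c, a, b, d⟩
  have p6 : ∀ e ∈ A6, (e ∩ V1).card = 0 ∧ (e ∩ V2).card = 0 ∧ (e ∩ V3).card = 2 ∧ e.card = 2 := by
    intro e he
    rw [hA6] at he
    obtain ⟨a, b, c, d⟩ := pat_inside (V1 := V3) (V2 := V1) (V3 := V2) h13.symm h23.symm he
    exact ⟨b, c, a, d⟩
  -- disjointness
  have d12 : Disjoint A1 A2 := disjoint_left.2 fun e h1 h2 => by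
    obtain ⟨x, -⟩ := p1 e h1; obtain ⟨y, -⟩ := p2 e h2; omega
  have d13 : Disjoint A1 A3 := disjoint_left.2 fun e h1 h2 => by
    obtain ⟨-, x, -⟩ := p1 e h1; obtain ⟨-, y, -⟩ := p3 e h2; omega
  have d14 : Disjoint A1 A4 := disjoint_left.2 fun e h1 h2 => by
    obtain ⟨x, -⟩ := p1 e h1; obtain ⟨y, -⟩ := p4 e h2; omega
  have d15 : Disjoint A1 A5 := disjoint_left.2 fun e h1 h2 => by
    obtain ⟨x, -⟩ := p1 e h1; obtain ⟨y, -⟩ := p5 e h2; omega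
  have d16 : Disjoint A1 A6 := disjoint_left.2 fun e h1 h2 => by
    obtain ⟨x, -⟩ := p1 e h1; obtain ⟨y, -⟩ := p6 e h2; omega
  have d23 : Disjoint A2 A3 := disjoint_left.2 fun e h1 h2 => by
    obtain ⟨x, -⟩ := p2 e h1; obtain ⟨y, -⟩ := p3 e h2; omega
  have d24 : Disjoint A2 A4 := disjoint_left.2 fun e h1 h2 => by
    obtain ⟨x, -⟩ := p2 e h1; obtain ⟨y, -⟩ := p4 e h2; omega
  have d25 : Disjoint A2 A5 := disjoint_left.2 fun e h1 h2 => by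
    obtain ⟨-, x, -⟩ := p2 e h1; obtain ⟨-, y, -⟩ := p5 e h2; omega
  have d26 : Disjoint A2 A6 := disjoint_left.2 fun e h1 h2 => by
    obtain ⟨-, x, -⟩ := p2 e h1; obtain ⟨-, y, -⟩ := p6 e h2; omega
  have d34 : Disjoint A3 A4 := disjoint_left.2 fun e h1 h2 => by
    obtain ⟨x, -⟩ := p3 e h1; obtain ⟨y, -⟩ := p4 e h2; omega
  have d35 : Disjoint A3 A5 := disjoint_left.2 fun e h1 h2 => by
    obtain ⟨x, -⟩ := p3 e h1; obtain ⟨y, -⟩ := p5 e h2; omega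
  have d36 : Disjoint A3 A6 := disjoint_left.2 fun e h1 h2 => by
    obtain ⟨-, -, x, -⟩ := p3 e h1; obtain ⟨-, -, y, -⟩ := p6 e h2; omega
  have d45 : Disjoint A4 A5 := disjoint_left.2 fun e h1 h2 => by
    obtain ⟨x, -⟩ := p4 e h1; obtain ⟨y, -⟩ := p5 e h2; omega
  have d46 : Disjoint A4 A6 := disjoint_left.2 fun e h1 h2 => by
    obtain ⟨x, -⟩ := p4 e h1; obtain ⟨y, -⟩ := p6 e h2; omega
  have d56 : Disjoint A5 A6 := disjoint_left.2 fun e h1 h2 => by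
    obtain ⟨-, x, -⟩ := p5 e h1; obtain ⟨-, y, -⟩ := p6 e h2; omega
  -- union subset of all pairs
  have hU : A1 ∪ A2 ∪ A3 ∪ A4 ∪ A5 ∪ A6 ⊆ powersetCard 2 (univ : Finset α) := by
    intro e he
    rw [mem_powersetCard]
    refine ⟨subset_univ _, ?_⟩
    simp only [mem_union] at he
    rcases he with ((((h | h) | h) | h) | h) | h
    · exact (p1 e h).2.2.2
    · exact (p2 e h).2.2.2
    · exact (p3 e h).2.2.2
    · exact (p4 e h).2.2.2
    · exact (p5 e h).2.2.2
    · exact (p6 e h).2.2.2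
  have hsum : ∑ e ∈ A1 ∪ A2 ∪ A3 ∪ A4 ∪ A5 ∪ A6, f e =
      ∑ e ∈ A1, f e + ∑ e ∈ A2, f e + ∑ e ∈ A3, f e + ∑ e ∈ A4, f e + ∑ e ∈ A5, f e
        + ∑ e ∈ A6, f e := by
    rw [sum_union (by simp [disjoint_union_left, d16, d26, d36, d46, d56]),
      sum_union (by simp [disjoint_union_left, d15, d25, d35, d45]),
      sum_union (by simp [disjoint_union_left, d14, d24, d34]),
      sum_union (by simp [disjoint_union_left, d13, d23]),
      sum_union d12]
  calc V1.card * V2.card * (V3.card + (V1.card - 1)) ^ 2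
      + V2.card * V3.card * (V1.card + (V2.card - 1)) ^ 2
      + V3.card * V1.card * (V2.card + (V3.card - 1)) ^ 2
      + V1.card.choose 2 * V2.card ^ 2
      + V2.card.choose 2 * V3.card ^ 2
      + V3.card.choose 2 * V1.card ^ 2
      ≤ ∑ e ∈ A1, f e + ∑ e ∈ A2, f e + ∑ e ∈ A3, f e + ∑ e ∈ A4, f e + ∑ e ∈ A5, f e
        + ∑ e ∈ A6, f e := by
        gcongr
    _ = ∑ e ∈ A1 ∪ A2 ∪ A3 ∪ A4 ∪ A5 ∪ A6, f e := hsum.symm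
    _ ≤ ∑ e ∈ powersetCard 2 (univ : Finset α), f e := sum_le_sum_of_subset hU
    _ = normTwo H := rfl

lemma aux_cross {a b c t : ℝ} (ht0 : 0 ≤ t) (hu0 : 0 ≤ 2 * t - 1)
    (ha : t ≤ a) (hb : t ≤ b) (hc : 2 * t - 1 ≤ c) :
    t * t * (2 * t - 1) ^ 2 ≤ a * b * c ^ 2 := by
  have h1 : t * t ≤ a * b := mul_le_mul ha hb ht0 (ht0.trans ha)
  have h2 : (2 * t - 1) ^ 2 ≤ c ^ 2 := pow_le_pow_left₀ hu0 hc 2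
  exact mul_le_mul h1 h2 (pow_nonneg hu0 2) (mul_nonneg (ht0.trans ha) (ht0.trans hb))

lemma aux_inside {a b t : ℝ} (ht1 : 1 ≤ t) (ha : t ≤ a) (hb : t ≤ b) :
    t * (t - 1) / 2 * t ^ 2 ≤ a * (a - 1) / 2 * b ^ 2 := by
  have ht0 : (0 : ℝ) ≤ t := by linarith
  have h1 : t * (t - 1) ≤ a * (a - 1) :=
    mul_le_mul ha (by linarith) (by linarith) (by linarith)
  have h2 : t ^ 2 ≤ b ^ 2 := pow_le_pow_left₀ ht0 hb 2
  have h1' : t * (t - 1) / 2 ≤ a * (a - 1) / 2 := by linarith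
  exact mul_le_mul h1' h2 (pow_nonneg ht0 2)
    (by nlinarith)

end Aux

set_option maxHeartbeats 800000 in
theorem stmt_6 {α : Type*} [Fintype α] [DecidableEq α] (n : ℕ) (δ x1 x2 x3 : ℝ)
    (hδ0 : 0 < δ) (hδ : δ < 1 / 3) (hn : 9 / (2 * δ ^ 2) ≤ (n : ℝ))
    (V1 V2 V3 : Finset α)
    (h12 : Disjoint V1 V2) (h13 : Disjoint V1 V3) (h23 : Disjoint V2 V3)
    (c1 : (V1.card : ℝ) = x1 * n) (c2 : (V2.card : ℝ) = x2 * n)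
    (c3 : (V3.card : ℝ) = x3 * n)
    (hx1 : 1 / 3 - δ ≤ x1) (hx2 : 1 / 3 - δ ≤ x2) (hx3 : 1 / 3 - δ ≤ x3) :
    (normTwo (cycEdges V1 V2 V3) : ℝ) ≥ (n : ℝ) ^ 4 / 6 - 2 * δ * (n : ℝ) ^ 4 := by
  have hn0 : (0 : ℝ) ≤ n := Nat.cast_nonneg n
  have hN0 : (0 : ℝ) ≤ (normTwo (cycEdges V1 V2 V3) : ℝ) := Nat.cast_nonneg _
  rcases le_or_gt (1 / 12 : ℝ) δ with hbig | hsmall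
  · nlinarith [pow_nonneg hn0 4]
  · -- main case : δ < 1/12
    have hδ2 : (0 : ℝ) < δ ^ 2 := by positivity
    have h9 : (9 : ℝ) ≤ 2 * δ ^ 2 * n := by
      rw [div_le_iff₀ (by positivity)] at hn
      linarith [hn]
    have hn648 : (648 : ℝ) ≤ n := by nlinarith [sq_nonneg δ, h9]
    set t : ℝ := (1 / 3 - δ) * n with ht
    have htq : (n : ℝ) / 4 ≤ t := by
      rw [ht]; nlinarith
    have ht162 : (162 : ℝ) ≤ t := by linarith
    have hA : t ≤ (V1.card : ℝ) := by
      rw [c1]; exact mul_le_mul_of_nonneg_right hx1 hn0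
    have hB : t ≤ (V2.card : ℝ) := by
      rw [c2]; exact mul_le_mul_of_nonneg_right hx2 hn0
    have hC : t ≤ (V3.card : ℝ) := by
      rw [c3]; exact mul_le_mul_of_nonneg_right hx3 hn0
    have h1A : 1 ≤ V1.card := Nat.one_le_cast.mp (by linarith : (1 : ℝ) ≤ (V1.card : ℝ))
    have h1B : 1 ≤ V2.card := Nat.one_le_cast.mp (by linarith : (1 : ℝ) ≤ (V2.card : ℝ))
    have h1C : 1 ≤ V3.card := Nat.one_le_cast.mp (by linarith : (1 : ℝ) ≤ (V3.card : ℝ))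
    have key := normTwo_lower V1 V2 V3 h12 h13 h23
    have keyR := (Nat.cast_le (α := ℝ)).2 key
    push_cast [Nat.cast_sub h1A, Nat.cast_sub h1B, Nat.cast_sub h1C, Nat.cast_choose_two] at keyR
    set A := (V1.card : ℝ)
    set B := (V2.card : ℝ)
    set C := (V3.card : ℝ)
    have ht0 : (0 : ℝ) ≤ t := by linarith
    have h2t0 : (0 : ℝ) ≤ 2 * t - 1 := by linarith
    have ht10 : (0 : ℝ) ≤ t - 1 := by linarith
    have e1 : t * t * (2 * t - 1) ^ 2 ≤ A * B * (C + (A - 1)) ^ 2 :=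
      aux_cross ht0 h2t0 hA hB (by linarith)
    have e2 : t * t * (2 * t - 1) ^ 2 ≤ B * C * (A + (B - 1)) ^ 2 :=
      aux_cross ht0 h2t0 hB hC (by linarith)
    have e3 : t * t * (2 * t - 1) ^ 2 ≤ C * A * (B + (C - 1)) ^ 2 :=
      aux_cross ht0 h2t0 hC hA (by linarith)
    have e4 : t * (t - 1) / 2 * t ^ 2 ≤ A * (A - 1) / 2 * B ^ 2 :=
      aux_inside (by linarith) hA hB
    have e5 : t * (t - 1) / 2 * t ^ 2 ≤ B * (B - 1) / 2 * C ^ 2 :=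
      aux_inside (by linarith) hB hC
    have e6 : t * (t - 1) / 2 * t ^ 2 ≤ C * (C - 1) / 2 * A ^ 2 :=
      aux_inside (by linarith) hC hA
    -- now pure numeric estimates
    have hApoly : 13.5 * t ^ 4 - ((n : ℝ) ^ 4 / 6 - 2 * δ * (n : ℝ) ^ 4)
        ≥ 7.5 * δ ^ 2 * (n : ℝ) ^ 4 := by
      rw [ht]
      have h1 : (0:ℝ) ≤ δ ^ 2 * (1 - 12 * δ) * (n : ℝ) ^ 4 :=
        mul_nonneg (mul_nonneg (sq_nonneg δ) (by linarith)) (pow_nonneg hn0 4)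
      have h2 : (0:ℝ) ≤ δ ^ 4 * (n : ℝ) ^ 4 :=
        mul_nonneg (pow_nonneg hδ0.le 4) (pow_nonneg hn0 4)
      ring_nf
      ring_nf at h1 h2
      linarith [h1, h2]
    have hBpoly : 13.5 * t ^ 3 ≤ 7.5 * δ ^ 2 * (n : ℝ) ^ 4 := by
      have hcube : t ^ 3 ≤ ((n : ℝ) / 3) ^ 3 := by
        apply pow_le_pow_left₀ ht0
        rw [ht]; nlinarith
      have h45 : (4.5 : ℝ) * (n : ℝ) ^ 3 ≤ δ ^ 2 * n * (n : ℝ) ^ 3 := by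
        have := mul_le_mul_of_nonneg_right (by linarith : (4.5 : ℝ) ≤ δ ^ 2 * n)
          (pow_nonneg hn0 3)
        linarith
      nlinarith [pow_nonneg hn0 3]
    have hsum : 3 * (t * t * (2 * t - 1) ^ 2) + 3 * (t * (t - 1) / 2 * t ^ 2)
        = 13.5 * t ^ 4 - 13.5 * t ^ 3 + 3 * t ^ 2 := by ring
    have := sq_nonneg t
    linarith [keyR, e1, e2, e3, e4, e5, e6]
end

section
/- Let n ≥ 6 and let V1 ∪ V2 ∪ V3 = [n] be any partition. Then ‖C[V1,V2,V3]‖₂ ≤ ‖C_n‖₂, where C_n denotes C[W1,W2,W3] for a balanced partition W1 ∪ W2 ∪ W3 = [n] (all part sizes differ by at most 1). -/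
open Finset

namespace CycAux

variable {α : Type*} [Fintype α] [DecidableEq α]

lemma mem_cycEdges {V1 V2 V3 : Finset α} {E : Finset α} :
    E ∈ cycEdges V1 V2 V3 ↔ E.card = 3 ∧
      (((E ∩ V1).card = 1 ∧ (E ∩ V2).card = 1 ∧ (E ∩ V3).card = 1) ∨
       ((E ∩ V1).card = 2 ∧ (E ∩ V2).card = 1 ∧ (E ∩ V3).card = 0) ∨
       ((E ∩ V1).card = 0 ∧ (E ∩ V2).card = 2 ∧ (E ∩ V3).card = 1) ∨
       ((E ∩ V1).card = 1 ∧ (E ∩ V2).card = 0 ∧ (E ∩ V3).card = 2)) := by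
  simp only [cycEdges, Finset.mem_filter, Finset.mem_powersetCard, Finset.subset_univ,
    true_and, List.mem_cons, List.mem_singleton, Prod.mk.injEq, List.not_mem_nil, or_false]

lemma cyc_rot (V1 V2 V3 : Finset α) : cycEdges V2 V3 V1 = cycEdges V1 V2 V3 := by
  ext E
  rw [mem_cycEdges, mem_cycEdges]
  tauto

lemma card_parts {V1 V2 V3 : Finset α}
    (h12 : Disjoint V1 V2) (h13 : Disjoint V1 V3) (h23 : Disjoint V2 V3)
    (hcov : V1 ∪ V2 ∪ V3 = univ) (e : Finset α) :
    (e ∩ V1).card + (e ∩ V2).card + (e ∩ V3).card = e.card := by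
  have d1 : Disjoint (e ∩ V1) (e ∩ V2) :=
    h12.mono inter_subset_right inter_subset_right
  have d2 : Disjoint (e ∩ V1 ∪ e ∩ V2) (e ∩ V3) :=
    Finset.disjoint_union_left.mpr
      ⟨h13.mono inter_subset_right inter_subset_right,
       h23.mono inter_subset_right inter_subset_right⟩
  rw [← card_union_of_disjoint d1, ← card_union_of_disjoint d2,
    ← Finset.inter_union_distrib_left, ← Finset.inter_union_distrib_left, hcov,
    Finset.inter_univ]

lemma mem_tri {V1 V2 V3 : Finset α}
    (h12 : Disjoint V1 V2) (h13 : Disjoint V1 V3) (h23 : Disjoint V2 V3)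
    (hcov : V1 ∪ V2 ∪ V3 = univ) (z : α) :
    (z ∈ V1 ∧ z ∉ V2 ∧ z ∉ V3) ∨ (z ∉ V1 ∧ z ∈ V2 ∧ z ∉ V3) ∨ (z ∉ V1 ∧ z ∉ V2 ∧ z ∈ V3) := by
  have hz : z ∈ V1 ∪ V2 ∪ V3 := hcov ▸ mem_univ z
  simp only [Finset.mem_union] at hz
  have d12 := Finset.disjoint_left.mp h12
  have d13 := Finset.disjoint_left.mp h13
  have d23 := Finset.disjoint_left.mp h23
  tauto

lemma filter_superset_card {H : Finset (Finset α)} (hH : ∀ E ∈ H, E.card = 3)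
    {e : Finset α} (he : e.card = 2) :
    (H.filter fun E => e ⊆ E).card = ((univ \ e).filter fun z => insert z e ∈ H).card := by
  refine (Finset.card_bij (fun z _ => insert z e) ?_ ?_ ?_).symm
  · intro z hz
    simp only [Finset.mem_filter, Finset.mem_sdiff] at hz ⊢
    exact ⟨hz.2, Finset.subset_insert _ _⟩
  · intro z1 hz1 z2 hz2 h
    simp only [Finset.mem_filter, Finset.mem_sdiff] at hz1 hz2
    have : z1 ∈ insert z2 e := by
      have h' : insert z1 e = insert z2 e := h
      rw [← h']; exact Finset.mem_insert_self z1 e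
    rcases Finset.mem_insert.mp this with h' | h'
    · exact h'
    · exact absurd h' hz1.1.2
  · intro E hE
    simp only [Finset.mem_filter] at hE
    have hE3 : E.card = 3 := hH E hE.1
    have hsd : (E \ e).card = 1 := by
      rw [Finset.card_sdiff_of_subset hE.2, hE3, he]
    obtain ⟨z, hz⟩ := Finset.card_eq_one.mp hsd
    have hzE : z ∈ E \ e := hz ▸ Finset.mem_singleton_self z
    rw [Finset.mem_sdiff] at hzE
    refine ⟨z, ?_, ?_⟩
    · simp only [Finset.mem_filter, Finset.mem_sdiff]
      have : insert z e = E := by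
        apply Finset.eq_of_subset_of_card_le
        · exact Finset.insert_subset hzE.1 hE.2
        · rw [Finset.card_insert_of_notMem hzE.2, he, hE3]
      exact ⟨⟨mem_univ z, hzE.2⟩, this ▸ hE.1⟩
    · apply Finset.eq_of_subset_of_card_le
      · exact Finset.insert_subset hzE.1 hE.2
      · rw [Finset.card_insert_of_notMem hzE.2, he, hE3]

lemma insert_inter_card {W : Finset α} {e : Finset α} {z : α} (hz : z ∉ e) :
    (insert z e ∩ W).card = (e ∩ W).card + (if z ∈ W then 1 else 0) := by
  by_cases h : z ∈ W
  · rw [Finset.insert_inter_of_mem h, Finset.card_insert_of_notMem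
      (fun hc => hz (Finset.mem_of_mem_inter_left hc)), if_pos h]
  · rw [Finset.insert_inter_of_notMem h, if_neg h, Nat.add_zero]

end CycAux

namespace CycAux
variable {α : Type*} [Fintype α] [DecidableEq α]
variable {V1 V2 V3 : Finset α}

lemma cyc_card3 {E : Finset α} (h : E ∈ cycEdges V1 V2 V3) : E.card = 3 :=
  (mem_cycEdges.mp h).1

lemma deg200 (h12 : Disjoint V1 V2) (h13 : Disjoint V1 V3) (h23 : Disjoint V2 V3)
    (hcov : V1 ∪ V2 ∪ V3 = univ) {e : Finset α} (he : e.card = 2)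
    (hp1 : (e ∩ V1).card = 2) (hp2 : (e ∩ V2).card = 0) (hp3 : (e ∩ V3).card = 0) :
    ((cycEdges V1 V2 V3).filter fun E => e ⊆ E).card = V2.card := by
  rw [filter_superset_card (fun E hE => cyc_card3 hE) he]
  congr 1
  ext z
  simp only [Finset.mem_filter, Finset.mem_sdiff, Finset.mem_univ, true_and]
  constructor
  · rintro ⟨hze, hmem⟩
    rw [mem_cycEdges] at hmem
    rcases mem_tri h12 h13 h23 hcov z with ⟨t1, t2, t3⟩ | ⟨t1, t2, t3⟩ | ⟨t1, t2, t3⟩ <;>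
      [skip; exact t2; skip] <;>
      (obtain ⟨-, hd⟩ := hmem;
       rw [insert_inter_card hze, insert_inter_card hze, insert_inter_card hze] at hd;
       simp only [t1, t2, t3, if_true, if_false, hp1, hp2, hp3] at hd; omega)
  · intro hzV2
    have hze : z ∉ e := by
      intro hc
      have : z ∈ e ∩ V2 := Finset.mem_inter.mpr ⟨hc, hzV2⟩
      rw [Finset.card_eq_zero.mp hp2] at this
      exact absurd this (Finset.notMem_empty z)
    refine ⟨hze, ?_⟩
    rw [mem_cycEdges]
    have hz1 : z ∉ V1 := Finset.disjoint_right.mp h12 hzV2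
    have hz3 : z ∉ V3 := Finset.disjoint_left.mp h23 hzV2
    constructor
    · rw [Finset.card_insert_of_notMem hze, he]
    · right; left
      rw [insert_inter_card hze, insert_inter_card hze, insert_inter_card hze]
      simp [hz1, hz3, hzV2, hp1, hp2, hp3]

lemma deg110 (h12 : Disjoint V1 V2) (h13 : Disjoint V1 V3) (h23 : Disjoint V2 V3)
    (hcov : V1 ∪ V2 ∪ V3 = univ) {e : Finset α} (he : e.card = 2)
    (hp1 : (e ∩ V1).card = 1) (hp2 : (e ∩ V2).card = 1) (hp3 : (e ∩ V3).card = 0) :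
    ((cycEdges V1 V2 V3).filter fun E => e ⊆ E).card = V1.card + V3.card - 1 := by
  rw [filter_superset_card (fun E hE => cyc_card3 hE) he]
  have hset : ((univ \ e).filter fun z => insert z e ∈ cycEdges V1 V2 V3) = (V1 ∪ V3) \ e := by
    ext z
    simp only [Finset.mem_filter, Finset.mem_sdiff, Finset.mem_univ, true_and,
      Finset.mem_union]
    constructor
    · rintro ⟨hze, hmem⟩
      rw [mem_cycEdges] at hmem
      obtain ⟨-, hd⟩ := hmem
      rw [insert_inter_card hze, insert_inter_card hze, insert_inter_card hze] at hd
      rcases mem_tri h12 h13 h23 hcov z with ⟨t1, t2, t3⟩ | ⟨t1, t2, t3⟩ | ⟨t1, t2, t3⟩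
      · exact ⟨Or.inl t1, hze⟩
      · simp only [t1, t2, t3, if_true, if_false, hp1, hp2, hp3] at hd; omega
      · exact ⟨Or.inr t3, hze⟩
    · rintro ⟨hzV, hze⟩
      refine ⟨hze, ?_⟩
      rw [mem_cycEdges]
      refine ⟨by rw [Finset.card_insert_of_notMem hze, he], ?_⟩
      rw [insert_inter_card hze, insert_inter_card hze, insert_inter_card hze]
      rcases hzV with hz1 | hz3
      · have hz2 : z ∉ V2 := Finset.disjoint_left.mp h12 hz1
        have hz3 : z ∉ V3 := Finset.disjoint_left.mp h13 hz1
        right; left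
        simp [hz1, hz2, hz3, hp1, hp2, hp3]
      · have hz1 : z ∉ V1 := Finset.disjoint_right.mp h13 hz3
        have hz2 : z ∉ V2 := Finset.disjoint_right.mp h23 hz3
        left
        simp [hz1, hz2, hz3, hp1, hp2, hp3]
  rw [hset]
  have hcard : ((V1 ∪ V3) ∩ e).card = 1 := by
    rw [Finset.union_inter_distrib_right]
    rw [card_union_of_disjoint (h13.mono inter_subset_left inter_subset_left),
      Finset.inter_comm V1 e, Finset.inter_comm V3 e, hp1, hp3]
  have := Finset.card_sdiff_add_card_inter (V1 ∪ V3) e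
  rw [hcard] at this
  rw [card_union_of_disjoint h13] at this
  omega

end CycAux

namespace CycAux
variable {α : Type*} [Fintype α] [DecidableEq α]
variable {V1 V2 V3 : Finset α}

lemma classcount200 (h12 : Disjoint V1 V2) (h13 : Disjoint V1 V3) :
    ((powersetCard 2 (univ : Finset α)).filter fun e =>
      (e ∩ V1).card = 2 ∧ (e ∩ V2).card = 0 ∧ (e ∩ V3).card = 0).card = V1.card.choose 2 := by
  rw [← Finset.card_powersetCard 2 V1]
  congr 1
  ext e
  simp only [Finset.mem_filter, Finset.mem_powersetCard, Finset.subset_univ, true_and]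
  constructor
  · rintro ⟨he2, hp1, -, -⟩
    have : e ∩ V1 = e := Finset.eq_of_subset_of_card_le inter_subset_left (by omega)
    exact ⟨Finset.inter_eq_left.mp this, he2⟩
  · rintro ⟨hsub, he2⟩
    have h1 : e ∩ V1 = e := Finset.inter_eq_left.mpr hsub
    have h2 : e ∩ V2 = ∅ := by
      rw [Finset.eq_empty_iff_forall_notMem]
      intro x hx
      rw [Finset.mem_inter] at hx
      exact Finset.disjoint_left.mp h12 (hsub hx.1) hx.2
    have h3 : e ∩ V3 = ∅ := by
      rw [Finset.eq_empty_iff_forall_notMem]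
      intro x hx
      rw [Finset.mem_inter] at hx
      exact Finset.disjoint_left.mp h13 (hsub hx.1) hx.2
    rw [h1, h2, h3]
    simp [he2]

lemma classcount110 (h12 : Disjoint V1 V2) (h13 : Disjoint V1 V3) (h23 : Disjoint V2 V3) :
    ((powersetCard 2 (univ : Finset α)).filter fun e =>
      (e ∩ V1).card = 1 ∧ (e ∩ V2).card = 1 ∧ (e ∩ V3).card = 0).card = V1.card * V2.card := by
  rw [← Finset.card_product]
  refine (Finset.card_bij (fun (p : α × α) _ => ({p.1, p.2} : Finset α)) ?_ ?_ ?_).symm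
  · rintro ⟨x, y⟩ hp
    rw [Finset.mem_product] at hp
    obtain ⟨hx, hy⟩ := hp
    have hxy : x ≠ y := fun h => Finset.disjoint_left.mp h12 hx (h ▸ hy)
    have hyV1 : y ∉ V1 := Finset.disjoint_right.mp h12 hy
    have hxV2 : x ∉ V2 := Finset.disjoint_left.mp h12 hx
    have hxV3 : x ∉ V3 := Finset.disjoint_left.mp h13 hx
    have hyV3 : y ∉ V3 := Finset.disjoint_left.mp h23 hy
    have hxny : x ∉ ({y} : Finset α) := by simp [hxy]
    simp only [Finset.mem_filter, Finset.mem_powersetCard, Finset.subset_univ, true_and]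
    have e1 : (({x, y} : Finset α) ∩ V1).card = 1 := by
      rw [show ({x, y} : Finset α) = insert x {y} from rfl, insert_inter_card hxny,
        Finset.singleton_inter_of_notMem hyV1]
      simp [hx]
    have e2 : (({x, y} : Finset α) ∩ V2).card = 1 := by
      rw [show ({x, y} : Finset α) = insert x {y} from rfl, insert_inter_card hxny,
        Finset.singleton_inter_of_mem hy]
      simp [hxV2]
    have e3 : (({x, y} : Finset α) ∩ V3).card = 0 := by
      rw [show ({x, y} : Finset α) = insert x {y} from rfl, insert_inter_card hxny,
        Finset.singleton_inter_of_notMem hyV3]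
      simp [hxV3]
    exact ⟨by rw [Finset.card_insert_of_notMem hxny, Finset.card_singleton], e1, e2, e3⟩
  · rintro ⟨x1, y1⟩ hp1 ⟨x2, y2⟩ hp2 h
    rw [Finset.mem_product] at hp1 hp2
    have h' : ({x1, y1} : Finset α) = {x2, y2} := h
    have hx1 : x1 ∈ ({x2, y2} : Finset α) := h' ▸ (by simp)
    have hy1 : y1 ∈ ({x2, y2} : Finset α) := h' ▸ (by simp)
    simp only [Finset.mem_insert, Finset.mem_singleton] at hx1 hy1
    have hx1y2 : x1 ≠ y2 := fun hc => Finset.disjoint_left.mp h12 hp1.1 (hc ▸ hp2.2)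
    have hy1x2 : y1 ≠ x2 := fun hc => Finset.disjoint_right.mp h12 hp1.2 (hc ▸ hp2.1)
    have : x1 = x2 := hx1.resolve_right hx1y2
    have : y1 = y2 := hy1.resolve_left hy1x2
    simp_all
  · intro e he
    simp only [Finset.mem_filter, Finset.mem_powersetCard, Finset.subset_univ, true_and] at he
    obtain ⟨he2, hp1, hp2, hp3⟩ := he
    obtain ⟨x, hx⟩ := Finset.card_eq_one.mp hp1
    obtain ⟨y, hy⟩ := Finset.card_eq_one.mp hp2
    have hxe : x ∈ e ∩ V1 := hx ▸ Finset.mem_singleton_self x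
    have hye : y ∈ e ∩ V2 := hy ▸ Finset.mem_singleton_self y
    rw [Finset.mem_inter] at hxe hye
    have hxy : x ≠ y := fun h => Finset.disjoint_left.mp h12 hxe.2 (h ▸ hye.2)
    refine ⟨⟨x, y⟩, Finset.mem_product.mpr ⟨hxe.2, hye.2⟩, ?_⟩
    have hsub : ({x, y} : Finset α) ⊆ e := by
      intro t ht
      simp only [Finset.mem_insert, Finset.mem_singleton] at ht
      rcases ht with rfl | rfl
      · exact hxe.1
      · exact hye.1
    have hc2 : ({x, y} : Finset α).card = 2 := by
      rw [Finset.card_insert_of_notMem (by simp [hxy]), Finset.card_singleton]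
    show ({x, y} : Finset α) = e
    exact Finset.eq_of_subset_of_card_le hsub (by omega)

end CycAux

def fN (a b c : ℕ) : ℕ :=
  a.choose 2 * b^2 + b.choose 2 * c^2 + c.choose 2 * a^2
  + a*b*(a+c-1)^2 + b*c*(b+a-1)^2 + c*a*(c+b-1)^2

namespace CycAux
variable {α : Type*} [Fintype α] [DecidableEq α]
variable {V1 V2 V3 : Finset α}

lemma count (h12 : Disjoint V1 V2) (h13 : Disjoint V1 V3) (h23 : Disjoint V2 V3)
    (hcov : V1 ∪ V2 ∪ V3 = univ) :
    normTwo (cycEdges V1 V2 V3) = fN V1.card V2.card V3.card := by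
  have hcov2 : V2 ∪ V3 ∪ V1 = univ := by
    rw [← hcov]; ext x; simp only [Finset.mem_union]; tauto
  have hcov3 : V3 ∪ V1 ∪ V2 = univ := by
    rw [← hcov]; ext x; simp only [Finset.mem_union]; tauto
  unfold normTwo
  have key : ∀ e ∈ powersetCard 2 (univ : Finset α),
      ((cycEdges V1 V2 V3).filter fun E => e ⊆ E).card ^ 2 =
      (if (e ∩ V1).card = 2 ∧ (e ∩ V2).card = 0 ∧ (e ∩ V3).card = 0 then V2.card ^ 2 else 0) +
      (if (e ∩ V2).card = 2 ∧ (e ∩ V3).card = 0 ∧ (e ∩ V1).card = 0 then V3.card ^ 2 else 0) +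
      (if (e ∩ V3).card = 2 ∧ (e ∩ V1).card = 0 ∧ (e ∩ V2).card = 0 then V1.card ^ 2 else 0) +
      (if (e ∩ V1).card = 1 ∧ (e ∩ V2).card = 1 ∧ (e ∩ V3).card = 0 then
        (V1.card + V3.card - 1) ^ 2 else 0) +
      (if (e ∩ V2).card = 1 ∧ (e ∩ V3).card = 1 ∧ (e ∩ V1).card = 0 then
        (V2.card + V1.card - 1) ^ 2 else 0) +
      (if (e ∩ V3).card = 1 ∧ (e ∩ V1).card = 1 ∧ (e ∩ V2).card = 0 then
        (V3.card + V2.card - 1) ^ 2 else 0) := by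
    intro e he
    rw [Finset.mem_powersetCard] at he
    have hsum := card_parts h12 h13 h23 hcov e
    rw [he.2] at hsum
    rcases (by omega :
      ((e ∩ V1).card = 2 ∧ (e ∩ V2).card = 0 ∧ (e ∩ V3).card = 0) ∨
      ((e ∩ V2).card = 2 ∧ (e ∩ V3).card = 0 ∧ (e ∩ V1).card = 0) ∨
      ((e ∩ V3).card = 2 ∧ (e ∩ V1).card = 0 ∧ (e ∩ V2).card = 0) ∨
      ((e ∩ V1).card = 1 ∧ (e ∩ V2).card = 1 ∧ (e ∩ V3).card = 0) ∨
      ((e ∩ V2).card = 1 ∧ (e ∩ V3).card = 1 ∧ (e ∩ V1).card = 0) ∨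
      ((e ∩ V3).card = 1 ∧ (e ∩ V1).card = 1 ∧ (e ∩ V2).card = 0)) with
      ⟨p1, p2, p3⟩ | ⟨p1, p2, p3⟩ | ⟨p1, p2, p3⟩ | ⟨p1, p2, p3⟩ | ⟨p1, p2, p3⟩ | ⟨p1, p2, p3⟩
    · rw [deg200 h12 h13 h23 hcov he.2 p1 p2 p3]; simp [p1, p2, p3]
    · rw [← cyc_rot V1 V2 V3, deg200 h23 h12.symm h13.symm hcov2 he.2 p1 p2 p3]
      simp [p1, p2, p3]
    · rw [← cyc_rot V1 V2 V3, ← cyc_rot V2 V3 V1,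
        deg200 h13.symm h23.symm h12 hcov3 he.2 p1 p2 p3]
      simp [p1, p2, p3]
    · rw [deg110 h12 h13 h23 hcov he.2 p1 p2 p3]; simp [p1, p2, p3]
    · rw [← cyc_rot V1 V2 V3, deg110 h23 h12.symm h13.symm hcov2 he.2 p1 p2 p3]
      simp [p1, p2, p3]
    · rw [← cyc_rot V1 V2 V3, ← cyc_rot V2 V3 V1,
        deg110 h13.symm h23.symm h12 hcov3 he.2 p1 p2 p3]
      simp [p1, p2, p3]
  rw [Finset.sum_congr rfl key]
  simp only [Finset.sum_add_distrib, ← Finset.sum_filter, Finset.sum_const, smul_eq_mul]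
  rw [classcount200 h12 h13, classcount200 h23 h12.symm, classcount200 h13.symm h23.symm,
    classcount110 h12 h13 h23, classcount110 h23 h12.symm h13.symm,
    classcount110 h13.symm h23.symm h12]
  unfold fN
  ring

end CycAux

def G (a b c : ℤ) : ℤ :=
  a*(a-1)*b^2 + b*(b-1)*c^2 + c*(c-1)*a^2
  + 2*(a*b*(a+c-1)^2) + 2*(b*c*(b+a-1)^2) + 2*(c*a*(c+b-1)^2)

lemma chooseZ (a : ℕ) : ((a.choose 2 : ℕ) : ℤ) * 2 = (a : ℤ) * ((a : ℤ) - 1) := by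
  induction a with
  | zero => simp
  | succ n ih =>
    rw [Nat.choose_succ_succ, Nat.choose_one_right]
    push_cast
    linear_combination ih

lemma castfN (a b c : ℕ) : (fN a b c : ℤ) * 2 = G (a : ℤ) (b : ℤ) (c : ℤ) := by
  rcases Nat.eq_zero_or_pos a with ha|ha <;> rcases Nat.eq_zero_or_pos b with hb|hb <;>
    rcases Nat.eq_zero_or_pos c with hc|hc
  all_goals
    first
      | (subst ha; subst hb; subst hc; simp [fN, G])
      | (subst ha; subst hb; simp [fN, G])
      | (subst ha; subst hc; simp [fN, G])
      | (subst hb; subst hc; simp [fN, G])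
      | (have c1 : ((a+c-1:ℕ):ℤ) = (a:ℤ)+(c:ℤ)-1 := by omega
         have c2 : ((b+a-1:ℕ):ℤ) = (b:ℤ)+(a:ℤ)-1 := by omega
         have c3 : ((c+b-1:ℕ):ℤ) = (c:ℤ)+(b:ℤ)-1 := by omega
         unfold fN G
         push_cast [c1, c2, c3]
         linear_combination ((b:ℤ)^2) * chooseZ a + ((c:ℤ)^2) * chooseZ b +
           ((a:ℤ)^2) * chooseZ c)

lemma G_rot (a b c : ℤ) : G a b c = G b c a := by unfold G; ring

lemma bal_eq {a b c a' b' c' : ℤ}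
    (hs : a + b + c = a' + b' + c')
    (h1 : a - b ≤ 1) (h2 : b - a ≤ 1) (h3 : b - c ≤ 1) (h4 : c - b ≤ 1)
    (h5 : a - c ≤ 1) (h6 : c - a ≤ 1)
    (h1' : a' - b' ≤ 1) (h2' : b' - a' ≤ 1) (h3' : b' - c' ≤ 1) (h4' : c' - b' ≤ 1)
    (h5' : a' - c' ≤ 1) (h6' : c' - a' ≤ 1) :
    G a b c = G a' b' c' := by
  have hd : ∀ x y z x' y' z' : ℤ, x + y + z = x' + y' + z' →
      x - y ≤ 1 → y - x ≤ 1 → y - z ≤ 1 → z - y ≤ 1 → x - z ≤ 1 → z - x ≤ 1 →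
      x' - y' ≤ 1 → y' - x' ≤ 1 → y' - z' ≤ 1 → z' - y' ≤ 1 → x' - z' ≤ 1 → z' - x' ≤ 1 →
      (x = x' ∧ y = y' ∧ z = z') ∨ (x = y' ∧ y = z' ∧ z = x') ∨ (x = z' ∧ y = x' ∧ z = y') := by
    intros; omega
  rcases hd a b c a' b' c' hs h1 h2 h3 h4 h5 h6 h1' h2' h3' h4' h5' h6' with
    ⟨rfl, rfl, rfl⟩ | ⟨rfl, rfl, rfl⟩ | ⟨rfl, rfl, rfl⟩
  all_goals (unfold G; ring)

lemma stepA {a b c : ℤ} (hc : 0 ≤ c) (hcb : c ≤ b) (hba : b ≤ a) (hg : c + 2 ≤ a) :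
    G a b c ≤ G (a-1) b (c+1) := by
  unfold G
  rcases (by omega : c + 2 ≤ b ∨ b = c + 1 ∨ (b = c ∧ 1 ≤ c) ∨ (b = 0 ∧ c = 0)) with h|h|h|h
  · have h0 : (0:ℤ) ≤ c := by omega
    have h1 : (0:ℤ) ≤ a-b := by omega
    have h2 : (0:ℤ) ≤ b-c-2 := by omega
    linarith [h2, mul_nonneg (h2) h2, mul_nonneg (mul_nonneg (h2) h2) h2, h1, mul_nonneg (h1) h2, mul_nonneg (mul_nonneg (h1) h2) h2, h0, mul_nonneg (h0) h2, mul_nonneg (mul_nonneg (h0) h2) h2, mul_nonneg (h0) h1, mul_nonneg (mul_nonneg (h0) h1) h2, mul_nonneg (mul_nonneg (h0) h1) h1, mul_nonneg (h0) h0, mul_nonneg (mul_nonneg (h0) h0) h2, mul_nonneg (mul_nonneg (h0) h0) h1]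
  · subst h
    have h0 : (0:ℤ) ≤ c := by omega
    have h1 : (0:ℤ) ≤ a-c-2 := by omega
    linarith [h0, mul_nonneg (h0) h1, mul_nonneg (mul_nonneg (h0) h1) h1, mul_nonneg (h0) h0, mul_nonneg (mul_nonneg (h0) h0) h1]
  · obtain ⟨h, hc1⟩ := h
    subst h
    have h0 : (0:ℤ) ≤ b-1 := by omega
    have h1 : (0:ℤ) ≤ a-b-2 := by omega
    linarith [h1, mul_nonneg (h1) h1, h0, mul_nonneg (h0) h1, mul_nonneg (mul_nonneg (h0) h1) h1, mul_nonneg (h0) h0, mul_nonneg (mul_nonneg (h0) h0) h1]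
  · obtain ⟨hb0, hc0⟩ := h
    subst hb0
    subst hc0
    linarith

lemma stepB {a b c : ℤ} (hb : 0 ≤ b) (hbc : b ≤ c) (hca : c ≤ a) (hg : b + 2 ≤ a) :
    G a b c ≤ G (a-1) (b+1) c := by
  unfold G
  rcases (by omega : b + 2 ≤ c ∨ c = b + 1 ∨ (c = b ∧ 1 ≤ b) ∨ (b = 0 ∧ c = 0)) with h|h|h|h
  · have h0 : (0:ℤ) ≤ b := by omega
    have h1 : (0:ℤ) ≤ a-c := by omega
    have h2 : (0:ℤ) ≤ c-b-2 := by omega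
    linarith [h2, mul_nonneg (h2) h2, mul_nonneg (mul_nonneg (h2) h2) h2, h1, mul_nonneg (h1) h2, mul_nonneg (mul_nonneg (h1) h2) h2, mul_nonneg (h1) h1, mul_nonneg (mul_nonneg (h1) h1) h2, mul_nonneg (mul_nonneg (h1) h1) h1, h0, mul_nonneg (h0) h2, mul_nonneg (mul_nonneg (h0) h2) h2, mul_nonneg (h0) h1, mul_nonneg (mul_nonneg (h0) h1) h2, mul_nonneg (mul_nonneg (h0) h1) h1, mul_nonneg (h0) h0, mul_nonneg (mul_nonneg (h0) h0) h2, mul_nonneg (mul_nonneg (h0) h0) h1]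
  · subst h
    have h0 : (0:ℤ) ≤ b := by omega
    have h1 : (0:ℤ) ≤ a-b-2 := by omega
    linarith [h1, mul_nonneg (h1) h1, mul_nonneg (mul_nonneg (h1) h1) h1, h0, mul_nonneg (h0) h1, mul_nonneg (mul_nonneg (h0) h1) h1, mul_nonneg (h0) h0, mul_nonneg (mul_nonneg (h0) h0) h1]
  · obtain ⟨h, hb1⟩ := h
    subst h
    have h0 : (0:ℤ) ≤ c-1 := by omega
    have h1 : (0:ℤ) ≤ a-c-2 := by omega
    linarith [h1, mul_nonneg (h1) h1, mul_nonneg (mul_nonneg (h1) h1) h1, h0, mul_nonneg (h0) h1, mul_nonneg (mul_nonneg (h0) h1) h1, mul_nonneg (h0) h0, mul_nonneg (mul_nonneg (h0) h0) h1]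
  · obtain ⟨hb0, hc0⟩ := h
    subst hb0
    subst hc0
    have h1 : (0:ℤ) ≤ a-2 := by omega
    linarith [h1, mul_nonneg (h1) h1, mul_nonneg (mul_nonneg (h1) h1) h1]

lemma toNat_step {x y g : ℤ} {m : ℕ} (h : x = y + (6*g - 6)) (hy : 0 ≤ y) (hg : 2 ≤ g)
    (hx : x.toNat ≤ m + 1) : y.toNat ≤ m := by omega

lemma G_le_bal : ∀ (m : ℕ) (a b c : ℤ), 0 ≤ a → 0 ≤ b → 0 ≤ c →
    ((a-b)^2+(b-c)^2+(c-a)^2).toNat ≤ m →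
    ∀ a' b' c' : ℤ, 0 ≤ a' → 0 ≤ b' → 0 ≤ c' → a + b + c = a' + b' + c' →
    a' - b' ≤ 1 → b' - a' ≤ 1 → b' - c' ≤ 1 → c' - b' ≤ 1 → a' - c' ≤ 1 → c' - a' ≤ 1 →
    G a b c ≤ G a' b' c' := by
  intro m
  induction m with
  | zero =>
    intro a b c ha hb hc hm a' b' c' ha' hb' hc' hs k1 k2 k3 k4 k5 k6
    have h0 : (a-b)^2+(b-c)^2+(c-a)^2 ≤ 0 := Int.toNat_eq_zero.mp (Nat.le_zero.mp hm)
    have e1 : (a-b)^2 ≤ 0 := by nlinarith [sq_nonneg (b-c), sq_nonneg (c-a)]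
    have e2 : (b-c)^2 ≤ 0 := by nlinarith [sq_nonneg (a-b), sq_nonneg (c-a)]
    have hab : a - b = 0 := by
      have := (pow_eq_zero_iff (two_ne_zero)).mp (le_antisymm e1 (sq_nonneg _))
      exact this
    have hbc : b - c = 0 := by
      have := (pow_eq_zero_iff (two_ne_zero)).mp (le_antisymm e2 (sq_nonneg _))
      exact this
    exact le_of_eq (bal_eq hs (by omega) (by omega) (by omega) (by omega) (by omega)
      (by omega) k1 k2 k3 k4 k5 k6)
  | succ m ih =>
    intro a b c ha hb hc hm a' b' c' ha' hb' hc' hs k1 k2 k3 k4 k5 k6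
    by_cases hbal : a - b ≤ 1 ∧ b - a ≤ 1 ∧ b - c ≤ 1 ∧ c - b ≤ 1 ∧ a - c ≤ 1 ∧ c - a ≤ 1
    · exact le_of_eq (bal_eq hs hbal.1 hbal.2.1 hbal.2.2.1 hbal.2.2.2.1 hbal.2.2.2.2.1
        hbal.2.2.2.2.2 k1 k2 k3 k4 k5 k6)
    · rcases (by omega :
        (b ≤ a ∧ c ≤ b ∧ c + 2 ≤ a) ∨ (c ≤ a ∧ b ≤ c ∧ b + 2 ≤ a) ∨
        (c ≤ b ∧ a ≤ c ∧ a + 2 ≤ b) ∨ (a ≤ b ∧ c ≤ a ∧ c + 2 ≤ b) ∨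
        (a ≤ c ∧ b ≤ a ∧ b + 2 ≤ c) ∨ (b ≤ c ∧ a ≤ b ∧ a + 2 ≤ c)) with h|h|h|h|h|h
      · exact le_trans (stepA hc h.2.1 h.1 h.2.2)
          (ih (a-1) b (c+1) (by omega) hb (by omega)
            (toNat_step (g := a - c) (by ring) (by positivity) (by omega) hm)
            a' b' c' ha' hb' hc' (by omega) k1 k2 k3 k4 k5 k6)
      · exact le_trans (stepB hb h.2.1 h.1 h.2.2)
          (ih (a-1) (b+1) c (by omega) (by omega) hc
            (toNat_step (g := a - b) (by ring) (by positivity) (by omega) hm)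
            a' b' c' ha' hb' hc' (by omega) k1 k2 k3 k4 k5 k6)
      · calc G a b c = G b c a := G_rot a b c
          _ ≤ G (b-1) c (a+1) := stepA ha h.2.1 h.1 h.2.2
          _ = G (a+1) (b-1) c := by unfold G; ring
          _ ≤ G a' b' c' := ih (a+1) (b-1) c (by omega) (by omega) hc
              (toNat_step (g := b - a) (by ring) (by positivity) (by omega) hm)
              a' b' c' ha' hb' hc' (by omega) k1 k2 k3 k4 k5 k6
      · calc G a b c = G b c a := G_rot a b c
          _ ≤ G (b-1) (c+1) a := stepB hc h.2.1 h.1 h.2.2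
          _ = G a (b-1) (c+1) := by unfold G; ring
          _ ≤ G a' b' c' := ih a (b-1) (c+1) ha (by omega) (by omega)
              (toNat_step (g := b - c) (by ring) (by positivity) (by omega) hm)
              a' b' c' ha' hb' hc' (by omega) k1 k2 k3 k4 k5 k6
      · calc G a b c = G c a b := (G_rot a b c).trans (G_rot b c a)
          _ ≤ G (c-1) a (b+1) := stepA hb h.2.1 h.1 h.2.2
          _ = G a (b+1) (c-1) := by unfold G; ring
          _ ≤ G a' b' c' := ih a (b+1) (c-1) ha (by omega) (by omega)
              (toNat_step (g := c - b) (by ring) (by positivity) (by omega) hm)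
              a' b' c' ha' hb' hc' (by omega) k1 k2 k3 k4 k5 k6
      · calc G a b c = G c a b := (G_rot a b c).trans (G_rot b c a)
          _ ≤ G (c-1) (a+1) b := stepB ha h.2.1 h.1 h.2.2
          _ = G (a+1) b (c-1) := by unfold G; ring
          _ ≤ G a' b' c' := ih (a+1) b (c-1) (by omega) hb (by omega)
              (toNat_step (g := c - a) (by ring) (by positivity) (by omega) hm)
              a' b' c' ha' hb' hc' (by omega) k1 k2 k3 k4 k5 k6


theorem stmt_7 (n : ℕ) (hn : 6 ≤ n)
    (V1 V2 V3 : Finset (Fin n))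
    (hV12 : Disjoint V1 V2) (hV13 : Disjoint V1 V3) (hV23 : Disjoint V2 V3)
    (hVcover : V1 ∪ V2 ∪ V3 = Finset.univ)
    (W1 W2 W3 : Finset (Fin n))
    (hW12 : Disjoint W1 W2) (hW13 : Disjoint W1 W3) (hW23 : Disjoint W2 W3)
    (hWcover : W1 ∪ W2 ∪ W3 = Finset.univ)
    (hb12 : |(W1.card : ℤ) - W2.card| ≤ 1)
    (hb13 : |(W1.card : ℤ) - W3.card| ≤ 1)
    (hb23 : |(W2.card : ℤ) - W3.card| ≤ 1) :
    normTwo (cycEdges V1 V2 V3) ≤ normTwo (cycEdges W1 W2 W3) := by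
  rw [CycAux.count hV12 hV13 hV23 hVcover, CycAux.count hW12 hW13 hW23 hWcover]
  have hsV : V1.card + V2.card + V3.card = n := by
    have h := CycAux.card_parts hV12 hV13 hV23 hVcover (Finset.univ : Finset (Fin n))
    simp only [Finset.univ_inter, Finset.card_univ, Fintype.card_fin] at h
    exact h
  have hsW : W1.card + W2.card + W3.card = n := by
    have h := CycAux.card_parts hW12 hW13 hW23 hWcover (Finset.univ : Finset (Fin n))
    simp only [Finset.univ_inter, Finset.card_univ, Fintype.card_fin] at h
    exact h
  rw [abs_le] at hb12 hb13 hb23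
  have key : (fN V1.card V2.card V3.card : ℤ) * 2 ≤ (fN W1.card W2.card W3.card : ℤ) * 2 := by
    rw [castfN, castfN]
    exact G_le_bal
      (((V1.card : ℤ) - V2.card)^2 + ((V2.card : ℤ) - V3.card)^2
        + ((V3.card : ℤ) - V1.card)^2).toNat
      V1.card V2.card V3.card (by positivity) (by positivity) (by positivity) le_rfl
      W1.card W2.card W3.card (by positivity) (by positivity) (by positivity)
      (by omega) (by omega) (by omega) (by omega) (by omega) (by omega) (by omega)
  have : (fN V1.card V2.card V3.card : ℤ) ≤ (fN W1.card W2.card W3.card : ℤ) := by linarith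
  exact_mod_cast this
end

section
/- For all integers n₁, n₂, n₃ ≥ 0 with n₁ ≥ n₂ ≥ n₃, n₁ ≥ n₃ + 2, n₃ ≥ 1, and n₁ + n₂ + n₃ ≥ 6, passing from part sizes (n₁, n₂, n₃) to (n₁ − 1, n₂, n₃ + 1) strictly increases the ℓ2-norm of the cyclic construction: ‖C[V1',V2',V3']‖₂ > ‖C[V1,V2,V3]‖₂, where |V1'| = n₁ − 1, |V2'| = n₂, |V3'| = n₃ + 1 and |V_i| = n_i. Explicitly, the difference equals n₁²n₃ + 2n₁(n₂² + n₃² − n₂ − n₃) + n₂³ − n₃³ − 2n₂²n₃ − 3n₂n₃² − (7/2)n₂² − (1/2)n₃² + 2n₂n₃ + (5/2)n₂ + (1/2)n₃. -/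
section Aux
open Finset
set_option linter.unusedSectionVars false
set_option linter.unreachableTactic false
set_option linter.unusedTactic false
set_option linter.unnecessarySeqFocus false
set_option maxHeartbeats 1000000

variable {α : Type*} [Fintype α] [DecidableEq α] {V1 V2 V3 : Finset α}

lemma mem_cycEdges {E : Finset α} :
    E ∈ cycEdges V1 V2 V3 ↔ E.card = 3 ∧
      ((E ∩ V1).card, (E ∩ V2).card, (E ∩ V3).card) ∈
        [((1 : ℕ), (1 : ℕ), (1 : ℕ)), (2, 1, 0), (0, 2, 1), (1, 0, 2)] := by
  simp [cycEdges, Finset.mem_powersetCard_univ]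

lemma inter_union_card (hd12 : Disjoint V1 V2) (hd13 : Disjoint V1 V3)
    (hd23 : Disjoint V2 V3) (E : Finset α) :
    (E ∩ (V1 ∪ V2 ∪ V3)).card = (E ∩ V1).card + (E ∩ V2).card + (E ∩ V3).card := by
  rw [Finset.inter_union_distrib_left, Finset.inter_union_distrib_left,
    Finset.card_union_of_disjoint, Finset.card_union_of_disjoint]
  · exact hd12.mono Finset.inter_subset_right Finset.inter_subset_right
  · exact Finset.disjoint_union_left.2
      ⟨hd13.mono Finset.inter_subset_right Finset.inter_subset_right,
       hd23.mono Finset.inter_subset_right Finset.inter_subset_right⟩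

lemma edge_subset (hd12 : Disjoint V1 V2) (hd13 : Disjoint V1 V3) (hd23 : Disjoint V2 V3)
    {E : Finset α} (hE : E ∈ cycEdges V1 V2 V3) : E ⊆ V1 ∪ V2 ∪ V3 := by
  obtain ⟨hc, hpat⟩ := mem_cycEdges.1 hE
  have hsum : (E ∩ V1).card + (E ∩ V2).card + (E ∩ V3).card = 3 := by
    simp only [List.mem_cons, List.not_mem_nil, or_false, Prod.mk.injEq] at hpat
    omega
  have h3 : (E ∩ (V1 ∪ V2 ∪ V3)).card = 3 := by
    rw [inter_union_card hd12 hd13 hd23, hsum]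
  have heq : E ∩ (V1 ∪ V2 ∪ V3) = E :=
    Finset.eq_of_subset_of_card_le Finset.inter_subset_left (by rw [hc, h3])
  exact heq ▸ Finset.inter_subset_right

lemma codeg_zero (hd12 : Disjoint V1 V2) (hd13 : Disjoint V1 V3) (hd23 : Disjoint V2 V3)
    {p : Finset α} (hp : p.card = 2)
    (hne : (p ∩ V1).card + (p ∩ V2).card + (p ∩ V3).card ≠ 2) :
    ((cycEdges V1 V2 V3).filter fun E => p ⊆ E).card = 0 := by
  rw [Finset.card_eq_zero, Finset.filter_eq_empty_iff]
  intro E hE hpE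
  have hsub : p ⊆ V1 ∪ V2 ∪ V3 := hpE.trans (edge_subset hd12 hd13 hd23 hE)
  have : (p ∩ (V1 ∪ V2 ∪ V3)).card = 2 := by
    rw [Finset.inter_eq_left.2 hsub, hp]
  rw [inter_union_card hd12 hd13 hd23] at this
  exact hne this


lemma inter_insert_card {V p : Finset α} {v : α} (hv : v ∉ p) :
    ((insert v p) ∩ V).card = (p ∩ V).card + if v ∈ V then 1 else 0 := by
  by_cases h : v ∈ V
  · rw [Finset.insert_inter_of_mem h,
      Finset.card_insert_of_notMem (fun hm => hv (Finset.mem_of_mem_inter_left hm)), if_pos h]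
  · rw [Finset.insert_inter_of_notMem h, if_neg h, Nat.add_zero]

lemma codeg_eq {p W : Finset α} (hp : p.card = 2)
    (hiff : ∀ v ∉ p, (insert v p ∈ cycEdges V1 V2 V3 ↔ v ∈ W))
    (hdisj : Disjoint W p) :
    ((cycEdges V1 V2 V3).filter fun E => p ⊆ E).card = W.card := by
  have himg : (cycEdges V1 V2 V3).filter (fun E => p ⊆ E)
      = W.image (fun v => insert v p) := by
    ext E
    simp only [mem_filter, mem_image]
    constructor
    · rintro ⟨hE, hpE⟩
      have hc3 : E.card = 3 := (mem_cycEdges.1 hE).1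
      have h1 : (E \ p).card = 1 := by rw [card_sdiff_of_subset hpE, hp, hc3]
      obtain ⟨v, hv⟩ := Finset.card_eq_one.1 h1
      have hvp : v ∉ p := (Finset.mem_sdiff.1 (hv ▸ Finset.mem_singleton_self v)).2
      have hE' : E = insert v p := by
        rw [← Finset.union_sdiff_of_subset hpE, hv]
        ext x; simp [or_comm]
      exact ⟨v, (hiff v hvp).1 (hE' ▸ hE), hE'.symm⟩
    · rintro ⟨v, hvW, rfl⟩
      have hvp : v ∉ p := Finset.disjoint_left.1 hdisj hvW
      exact ⟨(hiff v hvp).2 hvW, Finset.subset_insert _ _⟩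
  rw [himg, Finset.card_image_of_injOn]
  intro v hv w hw h
  have hvp : v ∉ p := Finset.disjoint_left.1 hdisj hv
  have : v ∈ insert w p := by
    rw [show insert w p = insert v p from h.symm]; exact Finset.mem_insert_self v p
  rcases Finset.mem_insert.1 this with h' | h'
  · exact h'
  · exact absurd h' hvp

lemma disj_of_card_zero {V p : Finset α} (h : (p ∩ V).card = 0) : Disjoint V p := by
  rw [Finset.card_eq_zero] at h
  exact (Finset.disjoint_left.2 fun a ha hb =>
    Finset.notMem_empty a (h ▸ Finset.mem_inter.2 ⟨hb, ha⟩))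

lemma card_union_sdiff {A B p : Finset α} (hAB : Disjoint A B)
    (h : ((A ∪ B) ∩ p).card = 1) : ((A ∪ B) \ p).card = A.card + B.card - 1 := by
  rw [← Finset.sdiff_inter_self_left, Finset.card_sdiff_of_subset Finset.inter_subset_left, h,
    Finset.card_union_of_disjoint hAB]

section codegs
variable (hd12 : Disjoint V1 V2) (hd13 : Disjoint V1 V3) (hd23 : Disjoint V2 V3)
  {p : Finset α} (hp : p.card = 2)
include hd12 hd13 hd23 hp

lemma codeg200 (h1 : (p ∩ V1).card = 2) (h2 : (p ∩ V2).card = 0) (h3 : (p ∩ V3).card = 0) :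
    ((cycEdges V1 V2 V3).filter fun E => p ⊆ E).card = V2.card := by
  refine codeg_eq hp (fun v hv => ?_) (disj_of_card_zero h2)
  have d12 := Finset.disjoint_left.1 hd12
  have d13 := Finset.disjoint_left.1 hd13
  have d23 := Finset.disjoint_left.1 hd23
  simp only [mem_cycEdges, Finset.card_insert_of_notMem hv, hp, inter_insert_card hv,
    h1, h2, h3, List.mem_cons, List.not_mem_nil, or_false, Prod.mk.injEq]
  by_cases hv1 : v ∈ V1 <;> by_cases hv2 : v ∈ V2 <;> by_cases hv3 : v ∈ V3 <;>
    simp_all <;> omega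

lemma codeg020 (h1 : (p ∩ V1).card = 0) (h2 : (p ∩ V2).card = 2) (h3 : (p ∩ V3).card = 0) :
    ((cycEdges V1 V2 V3).filter fun E => p ⊆ E).card = V3.card := by
  refine codeg_eq hp (fun v hv => ?_) (disj_of_card_zero h3)
  have d12 := Finset.disjoint_left.1 hd12
  have d13 := Finset.disjoint_left.1 hd13
  have d23 := Finset.disjoint_left.1 hd23
  simp only [mem_cycEdges, Finset.card_insert_of_notMem hv, hp, inter_insert_card hv,
    h1, h2, h3, List.mem_cons, List.not_mem_nil, or_false, Prod.mk.injEq]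
  by_cases hv1 : v ∈ V1 <;> by_cases hv2 : v ∈ V2 <;> by_cases hv3 : v ∈ V3 <;>
    simp_all <;> omega

lemma codeg002 (h1 : (p ∩ V1).card = 0) (h2 : (p ∩ V2).card = 0) (h3 : (p ∩ V3).card = 2) :
    ((cycEdges V1 V2 V3).filter fun E => p ⊆ E).card = V1.card := by
  refine codeg_eq hp (fun v hv => ?_) (disj_of_card_zero h1)
  have d12 := Finset.disjoint_left.1 hd12
  have d13 := Finset.disjoint_left.1 hd13
  have d23 := Finset.disjoint_left.1 hd23
  simp only [mem_cycEdges, Finset.card_insert_of_notMem hv, hp, inter_insert_card hv,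
    h1, h2, h3, List.mem_cons, List.not_mem_nil, or_false, Prod.mk.injEq]
  by_cases hv1 : v ∈ V1 <;> by_cases hv2 : v ∈ V2 <;> by_cases hv3 : v ∈ V3 <;>
    simp_all <;> omega

lemma codeg110 (h1 : (p ∩ V1).card = 1) (h2 : (p ∩ V2).card = 1) (h3 : (p ∩ V3).card = 0) :
    ((cycEdges V1 V2 V3).filter fun E => p ⊆ E).card = V1.card + V3.card - 1 := by
  have hint : (V1 ∪ V3) ∩ p = V1 ∩ p := by
    rw [Finset.union_inter_distrib_right]
    have hz : V3 ∩ p = ∅ := by rw [Finset.inter_comm]; exact Finset.card_eq_zero.1 h3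
    rw [hz, Finset.union_empty]
  have hW : ((V1 ∪ V3) \ p).card = V1.card + V3.card - 1 :=
    card_union_sdiff hd13 (by rw [hint, Finset.inter_comm]; exact h1)
  rw [← hW]
  refine codeg_eq hp (fun v hv => ?_) Finset.sdiff_disjoint
  have d12 := Finset.disjoint_left.1 hd12
  have d13 := Finset.disjoint_left.1 hd13
  have d23 := Finset.disjoint_left.1 hd23
  simp only [mem_cycEdges, Finset.card_insert_of_notMem hv, hp, inter_insert_card hv,
    h1, h2, h3, List.mem_cons, List.not_mem_nil, or_false, Prod.mk.injEq,
    Finset.mem_sdiff, Finset.mem_union, hv, not_false_iff, and_true]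
  by_cases hv1 : v ∈ V1 <;> by_cases hv2 : v ∈ V2 <;> by_cases hv3 : v ∈ V3 <;>
    simp_all <;> omega

lemma codeg101 (h1 : (p ∩ V1).card = 1) (h2 : (p ∩ V2).card = 0) (h3 : (p ∩ V3).card = 1) :
    ((cycEdges V1 V2 V3).filter fun E => p ⊆ E).card = V2.card + V3.card - 1 := by
  have hint : (V2 ∪ V3) ∩ p = V3 ∩ p := by
    rw [Finset.union_inter_distrib_right]
    have hz : V2 ∩ p = ∅ := by rw [Finset.inter_comm]; exact Finset.card_eq_zero.1 h2
    rw [hz, Finset.empty_union]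
  have hW : ((V2 ∪ V3) \ p).card = V2.card + V3.card - 1 :=
    card_union_sdiff hd23 (by rw [hint, Finset.inter_comm]; exact h3)
  rw [← hW]
  refine codeg_eq hp (fun v hv => ?_) Finset.sdiff_disjoint
  have d12 := Finset.disjoint_left.1 hd12
  have d13 := Finset.disjoint_left.1 hd13
  have d23 := Finset.disjoint_left.1 hd23
  simp only [mem_cycEdges, Finset.card_insert_of_notMem hv, hp, inter_insert_card hv,
    h1, h2, h3, List.mem_cons, List.not_mem_nil, or_false, Prod.mk.injEq,
    Finset.mem_sdiff, Finset.mem_union, hv, not_false_iff, and_true]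
  by_cases hv1 : v ∈ V1 <;> by_cases hv2 : v ∈ V2 <;> by_cases hv3 : v ∈ V3 <;>
    simp_all <;> omega

lemma codeg011 (h1 : (p ∩ V1).card = 0) (h2 : (p ∩ V2).card = 1) (h3 : (p ∩ V3).card = 1) :
    ((cycEdges V1 V2 V3).filter fun E => p ⊆ E).card = V1.card + V2.card - 1 := by
  have hint : (V1 ∪ V2) ∩ p = V2 ∩ p := by
    rw [Finset.union_inter_distrib_right]
    have hz : V1 ∩ p = ∅ := by rw [Finset.inter_comm]; exact Finset.card_eq_zero.1 h1
    rw [hz, Finset.empty_union]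
  have hW : ((V1 ∪ V2) \ p).card = V1.card + V2.card - 1 :=
    card_union_sdiff hd12 (by rw [hint, Finset.inter_comm]; exact h2)
  rw [← hW]
  refine codeg_eq hp (fun v hv => ?_) Finset.sdiff_disjoint
  have d12 := Finset.disjoint_left.1 hd12
  have d13 := Finset.disjoint_left.1 hd13
  have d23 := Finset.disjoint_left.1 hd23
  simp only [mem_cycEdges, Finset.card_insert_of_notMem hv, hp, inter_insert_card hv,
    h1, h2, h3, List.mem_cons, List.not_mem_nil, or_false, Prod.mk.injEq,
    Finset.mem_sdiff, Finset.mem_union, hv, not_false_iff, and_true]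
  by_cases hv1 : v ∈ V1 <;> by_cases hv2 : v ∈ V2 <;> by_cases hv3 : v ∈ V3 <;>
    simp_all <;> omega

end codegs

lemma card_filter_pair (A B C : Finset α) (hAB : Disjoint A B) (hAC : Disjoint A C)
    (hBC : Disjoint B C) :
    (((Finset.powersetCard 2 (Finset.univ : Finset α)).filter
      fun p => (p ∩ A).card = 1 ∧ (p ∩ B).card = 1 ∧ (p ∩ C).card = 0)).card
      = A.card * B.card := by
  have himg : ((Finset.powersetCard 2 (Finset.univ : Finset α)).filter
      fun p => (p ∩ A).card = 1 ∧ (p ∩ B).card = 1 ∧ (p ∩ C).card = 0)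
      = (A ×ˢ B).image fun q => ({q.1, q.2} : Finset α) := by
    ext p
    simp only [mem_filter, Finset.mem_powersetCard_univ, mem_image, Finset.mem_product,
      Prod.exists]
    constructor
    · rintro ⟨hp2, hA, hB, _⟩
      obtain ⟨x, hx⟩ := Finset.card_eq_one.1 hA
      obtain ⟨y, hy⟩ := Finset.card_eq_one.1 hB
      have hxp : x ∈ p ∧ x ∈ A := Finset.mem_inter.1 (hx ▸ Finset.mem_singleton_self x)
      have hyp : y ∈ p ∧ y ∈ B := Finset.mem_inter.1 (hy ▸ Finset.mem_singleton_self y)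
      have hxy : x ≠ y := fun h => Finset.disjoint_left.1 hAB hxp.2 (h ▸ hyp.2)
      refine ⟨x, y, ⟨hxp.2, hyp.2⟩, ?_⟩
      have hsub : ({x, y} : Finset α) ⊆ p := by
        intro a ha; rcases Finset.mem_insert.1 ha with rfl | ha
        · exact hxp.1
        · exact (Finset.mem_singleton.1 ha) ▸ hyp.1
      refine Finset.eq_of_subset_of_card_le hsub ?_
      rw [hp2, Finset.card_insert_of_notMem (by simp [hxy]), Finset.card_singleton]
    · rintro ⟨x, y, ⟨hx, hy⟩, rfl⟩
      have hxy : x ≠ y := fun h => Finset.disjoint_left.1 hAB hx (h ▸ hy)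
      have hyA : y ∉ A := fun h => Finset.disjoint_left.1 hAB h hy
      have hxB : x ∉ B := fun h => Finset.disjoint_left.1 hAB hx h
      have hxC : x ∉ C := fun h => Finset.disjoint_left.1 hAC hx h
      have hyC : y ∉ C := fun h => Finset.disjoint_left.1 hBC hy h
      refine ⟨by rw [Finset.card_insert_of_notMem (by simp [hxy]), Finset.card_singleton],
        ?_, ?_, ?_⟩
      · have : ({x, y} : Finset α) ∩ A = {x} := by
          ext a; simp only [Finset.mem_inter, Finset.mem_insert, Finset.mem_singleton]
          constructor
          · rintro ⟨rfl | rfl, h⟩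
            · rfl
            · exact absurd h hyA
          · rintro rfl; exact ⟨Or.inl rfl, hx⟩
        rw [this, Finset.card_singleton]
      · have : ({x, y} : Finset α) ∩ B = {y} := by
          ext a; simp only [Finset.mem_inter, Finset.mem_insert, Finset.mem_singleton]
          constructor
          · rintro ⟨rfl | rfl, h⟩
            · exact absurd h hxB
            · rfl
          · rintro rfl; exact ⟨Or.inr rfl, hy⟩
        rw [this, Finset.card_singleton]
      · have : ({x, y} : Finset α) ∩ C = ∅ := by
          ext a; simp only [Finset.mem_inter, Finset.mem_insert, Finset.mem_singleton,
            Finset.notMem_empty, iff_false, not_and]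
          rintro (rfl | rfl)
          · exact hxC
          · exact hyC
        rw [this, Finset.card_empty]
  rw [himg, Finset.card_image_of_injOn, Finset.card_product]
  rintro ⟨x, y⟩ hxy ⟨x', y'⟩ hxy' h
  simp only [Finset.mem_coe, Finset.mem_product] at hxy hxy'
  have h2 : ({x, y} : Finset α) = {x', y'} := h
  have hx : x ∈ ({x', y'} : Finset α) := by rw [← h2]; exact Finset.mem_insert_self x {y}
  have hy : y ∈ ({x', y'} : Finset α) := by
    rw [← h2]; exact Finset.mem_insert.2 (Or.inr (Finset.mem_singleton_self y))
  have hxx : x = x' := by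
    rcases Finset.mem_insert.1 hx with h' | h'
    · exact h'
    · exact absurd ((Finset.mem_singleton.1 h') ▸ hxy'.2) (Finset.disjoint_left.1 hAB hxy.1)
  have hyy : y = y' := by
    rcases Finset.mem_insert.1 hy with h' | h'
    · exact absurd hxy.2 (Finset.disjoint_left.1 hAB (h' ▸ hxy'.1))
    · exact Finset.mem_singleton.1 h'
  simp [hxx, hyy]

lemma filter_pure_eq (A B C : Finset α) (hAB : Disjoint A B) (hAC : Disjoint A C) :
    ((Finset.powersetCard 2 (Finset.univ : Finset α)).filter
      fun p => (p ∩ A).card = 2 ∧ (p ∩ B).card = 0 ∧ (p ∩ C).card = 0)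
      = Finset.powersetCard 2 A := by
  ext p
  simp only [mem_filter, Finset.mem_powersetCard, Finset.subset_univ, true_and]
  constructor
  · rintro ⟨hp2, hA, _, _⟩
    have heq : p ∩ A = p := Finset.eq_of_subset_of_card_le Finset.inter_subset_left
      (by rw [hp2, hA])
    exact ⟨heq ▸ Finset.inter_subset_right, hp2⟩
  · rintro ⟨hsub, hp2⟩
    have h1 : p ∩ A = p := Finset.inter_eq_left.2 hsub
    have h2 : p ∩ B = ∅ := by
      ext a; simp only [Finset.mem_inter, Finset.notMem_empty, iff_false, not_and]
      exact fun ha hb => Finset.disjoint_left.1 hAB (hsub ha) hb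
    have h3 : p ∩ C = ∅ := by
      ext a; simp only [Finset.mem_inter, Finset.notMem_empty, iff_false, not_and]
      exact fun ha hb => Finset.disjoint_left.1 hAC (hsub ha) hb
    exact ⟨hp2, by rw [h1, hp2], by rw [h2, Finset.card_empty], by rw [h3, Finset.card_empty]⟩

section codegs2
variable (hd12 : Disjoint V1 V2) (hd13 : Disjoint V1 V3) (hd23 : Disjoint V2 V3)
include hd12 hd13 hd23

lemma norm_formula :
    normTwo (cycEdges V1 V2 V3) =
      Nat.choose V1.card 2 * V2.card ^ 2 + Nat.choose V2.card 2 * V3.card ^ 2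
      + Nat.choose V3.card 2 * V1.card ^ 2
      + V1.card * V2.card * (V1.card + V3.card - 1) ^ 2
      + V1.card * V3.card * (V2.card + V3.card - 1) ^ 2
      + V2.card * V3.card * (V1.card + V2.card - 1) ^ 2 := by
  classical
  unfold normTwo
  set S := Finset.powersetCard 2 (Finset.univ : Finset α) with hS
  set f : Finset α → ℕ := fun p => ((cycEdges V1 V2 V3).filter fun E => p ⊆ E).card ^ 2 with hf
  set t : Finset α → ℕ × ℕ × ℕ :=
    fun p => ((p ∩ V1).card, (p ∩ V2).card, (p ∩ V3).card) with ht
  have hvan : ∀ p ∈ S, f p ≠ 0 →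
      (t p = (2,0,0) ∨ t p = (0,2,0) ∨ t p = (0,0,2) ∨
       t p = (1,1,0) ∨ t p = (1,0,1) ∨ t p = (0,1,1)) := by
    intro p hpS hne
    have hp2 : p.card = 2 := Finset.mem_powersetCard_univ.1 hpS
    have hsum2 : (p ∩ V1).card + (p ∩ V2).card + (p ∩ V3).card = 2 := by
      by_contra h
      rw [hf] at hne
      simp only [codeg_zero hd12 hd13 hd23 hp2 h] at hne
      exact hne (by norm_num)
    simp only [ht, Prod.mk.injEq]
    omega
  rw [← Finset.sum_filter_of_ne hvan]
  rw [Finset.filter_or, Finset.filter_or, Finset.filter_or, Finset.filter_or, Finset.filter_or]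
  have hdj : ∀ (k k' : ℕ × ℕ × ℕ), k ≠ k' →
      Disjoint (S.filter fun p => t p = k) (S.filter fun p => t p = k') := by
    intro k k' hkk
    refine Finset.disjoint_left.2 fun p h1 h2 => ?_
    exact hkk ((Finset.mem_filter.1 h1).2 ▸ (Finset.mem_filter.1 h2).2 ▸ rfl)
  rw [Finset.sum_union, Finset.sum_union, Finset.sum_union, Finset.sum_union,
    Finset.sum_union]
  rotate_left
  · exact hdj _ _ (by decide)
  · exact Finset.disjoint_union_right.2 ⟨hdj _ _ (by decide), hdj _ _ (by decide)⟩
  · exact Finset.disjoint_union_right.2 ⟨hdj _ _ (by decide),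
      Finset.disjoint_union_right.2 ⟨hdj _ _ (by decide), hdj _ _ (by decide)⟩⟩
  · exact Finset.disjoint_union_right.2 ⟨hdj _ _ (by decide),
      Finset.disjoint_union_right.2 ⟨hdj _ _ (by decide),
        Finset.disjoint_union_right.2 ⟨hdj _ _ (by decide), hdj _ _ (by decide)⟩⟩⟩
  · exact Finset.disjoint_union_right.2 ⟨hdj _ _ (by decide),
      Finset.disjoint_union_right.2 ⟨hdj _ _ (by decide),
        Finset.disjoint_union_right.2 ⟨hdj _ _ (by decide),
          Finset.disjoint_union_right.2 ⟨hdj _ _ (by decide), hdj _ _ (by decide)⟩⟩⟩⟩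
  have e200 : ∑ p ∈ S.filter (fun p => t p = (2,0,0)), f p = Nat.choose V1.card 2 * V2.card ^ 2 := by
    have hconst : ∀ p ∈ S.filter (fun p => t p = (2,0,0)), f p = V2.card ^ 2 := by
      intro p hp
      obtain ⟨hpS, hpt⟩ := Finset.mem_filter.1 hp
      have hp2 : p.card = 2 := Finset.mem_powersetCard_univ.1 hpS
      simp only [ht, Prod.mk.injEq] at hpt
      simp only [hf]
      rw [codeg200 hd12 hd13 hd23 hp2 hpt.1 hpt.2.1 hpt.2.2]
    rw [Finset.sum_congr rfl hconst, Finset.sum_const, smul_eq_mul]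
    congr 1
    have hcg : S.filter (fun p => t p = (2,0,0))
        = S.filter (fun p => (p ∩ V1).card = 2 ∧ (p ∩ V2).card = 0 ∧ (p ∩ V3).card = 0) :=
      Finset.filter_congr (fun p _ => by simp only [ht, Prod.mk.injEq] <;> tauto)
    rw [hcg, hS, filter_pure_eq V1 V2 V3 hd12 hd13, Finset.card_powersetCard]
  have e020 : ∑ p ∈ S.filter (fun p => t p = (0,2,0)), f p = Nat.choose V2.card 2 * V3.card ^ 2 := by
    have hconst : ∀ p ∈ S.filter (fun p => t p = (0,2,0)), f p = V3.card ^ 2 := by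
      intro p hp
      obtain ⟨hpS, hpt⟩ := Finset.mem_filter.1 hp
      have hp2 : p.card = 2 := Finset.mem_powersetCard_univ.1 hpS
      simp only [ht, Prod.mk.injEq] at hpt
      simp only [hf]
      rw [codeg020 hd12 hd13 hd23 hp2 hpt.1 hpt.2.1 hpt.2.2]
    rw [Finset.sum_congr rfl hconst, Finset.sum_const, smul_eq_mul]
    congr 1
    have hcg : S.filter (fun p => t p = (0,2,0))
        = S.filter (fun p => (p ∩ V2).card = 2 ∧ (p ∩ V1).card = 0 ∧ (p ∩ V3).card = 0) :=
      Finset.filter_congr (fun p _ => by simp only [ht, Prod.mk.injEq] <;> tauto)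
    rw [hcg, hS, filter_pure_eq V2 V1 V3 hd12.symm hd23, Finset.card_powersetCard]
  have e002 : ∑ p ∈ S.filter (fun p => t p = (0,0,2)), f p = Nat.choose V3.card 2 * V1.card ^ 2 := by
    have hconst : ∀ p ∈ S.filter (fun p => t p = (0,0,2)), f p = V1.card ^ 2 := by
      intro p hp
      obtain ⟨hpS, hpt⟩ := Finset.mem_filter.1 hp
      have hp2 : p.card = 2 := Finset.mem_powersetCard_univ.1 hpS
      simp only [ht, Prod.mk.injEq] at hpt
      simp only [hf]
      rw [codeg002 hd12 hd13 hd23 hp2 hpt.1 hpt.2.1 hpt.2.2]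
    rw [Finset.sum_congr rfl hconst, Finset.sum_const, smul_eq_mul]
    congr 1
    have hcg : S.filter (fun p => t p = (0,0,2))
        = S.filter (fun p => (p ∩ V3).card = 2 ∧ (p ∩ V1).card = 0 ∧ (p ∩ V2).card = 0) :=
      Finset.filter_congr (fun p _ => by simp only [ht, Prod.mk.injEq] <;> tauto)
    rw [hcg, hS, filter_pure_eq V3 V1 V2 hd13.symm hd23.symm, Finset.card_powersetCard]
  have e110 : ∑ p ∈ S.filter (fun p => t p = (1,1,0)), f p = V1.card * V2.card * (V1.card + V3.card - 1) ^ 2 := by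
    have hconst : ∀ p ∈ S.filter (fun p => t p = (1,1,0)), f p = (V1.card + V3.card - 1) ^ 2 := by
      intro p hp
      obtain ⟨hpS, hpt⟩ := Finset.mem_filter.1 hp
      have hp2 : p.card = 2 := Finset.mem_powersetCard_univ.1 hpS
      simp only [ht, Prod.mk.injEq] at hpt
      simp only [hf]
      rw [codeg110 hd12 hd13 hd23 hp2 hpt.1 hpt.2.1 hpt.2.2]
    rw [Finset.sum_congr rfl hconst, Finset.sum_const, smul_eq_mul]
    congr 1
    have hcg : S.filter (fun p => t p = (1,1,0))
        = S.filter (fun p => (p ∩ V1).card = 1 ∧ (p ∩ V2).card = 1 ∧ (p ∩ V3).card = 0) :=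
      Finset.filter_congr (fun p _ => by simp only [ht, Prod.mk.injEq] <;> tauto)
    rw [hcg, hS, card_filter_pair V1 V2 V3 hd12 hd13 hd23]
  have e101 : ∑ p ∈ S.filter (fun p => t p = (1,0,1)), f p = V1.card * V3.card * (V2.card + V3.card - 1) ^ 2 := by
    have hconst : ∀ p ∈ S.filter (fun p => t p = (1,0,1)), f p = (V2.card + V3.card - 1) ^ 2 := by
      intro p hp
      obtain ⟨hpS, hpt⟩ := Finset.mem_filter.1 hp
      have hp2 : p.card = 2 := Finset.mem_powersetCard_univ.1 hpS
      simp only [ht, Prod.mk.injEq] at hpt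
      simp only [hf]
      rw [codeg101 hd12 hd13 hd23 hp2 hpt.1 hpt.2.1 hpt.2.2]
    rw [Finset.sum_congr rfl hconst, Finset.sum_const, smul_eq_mul]
    congr 1
    have hcg : S.filter (fun p => t p = (1,0,1))
        = S.filter (fun p => (p ∩ V1).card = 1 ∧ (p ∩ V3).card = 1 ∧ (p ∩ V2).card = 0) :=
      Finset.filter_congr (fun p _ => by simp only [ht, Prod.mk.injEq] <;> tauto)
    rw [hcg, hS, card_filter_pair V1 V3 V2 hd13 hd12 hd23.symm]
  have e011 : ∑ p ∈ S.filter (fun p => t p = (0,1,1)), f p = V2.card * V3.card * (V1.card + V2.card - 1) ^ 2 := by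
    have hconst : ∀ p ∈ S.filter (fun p => t p = (0,1,1)), f p = (V1.card + V2.card - 1) ^ 2 := by
      intro p hp
      obtain ⟨hpS, hpt⟩ := Finset.mem_filter.1 hp
      have hp2 : p.card = 2 := Finset.mem_powersetCard_univ.1 hpS
      simp only [ht, Prod.mk.injEq] at hpt
      simp only [hf]
      rw [codeg011 hd12 hd13 hd23 hp2 hpt.1 hpt.2.1 hpt.2.2]
    rw [Finset.sum_congr rfl hconst, Finset.sum_const, smul_eq_mul]
    congr 1
    have hcg : S.filter (fun p => t p = (0,1,1))
        = S.filter (fun p => (p ∩ V2).card = 1 ∧ (p ∩ V3).card = 1 ∧ (p ∩ V1).card = 0) :=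
      Finset.filter_congr (fun p _ => by simp only [ht, Prod.mk.injEq] <;> tauto)
    rw [hcg, hS, card_filter_pair V2 V3 V1 hd23 hd12.symm hd13.symm]
  rw [e200, e020, e002, e110, e101, e011]
  simp [Nat.add_assoc]
end codegs2

lemma key_pos (m l k : ℕ) (hkl' : k ≤ l) (hkm' : k ≤ m) (hlm' : l ≤ m + 2)
    (hs' : 1 ≤ m + l + k) :
    (0 : ℚ) < ((m : ℚ) + 3) ^ 2 * ((k : ℚ) + 1)
        + 2 * ((m : ℚ) + 3) * (((l : ℚ) + 1) ^ 2 + ((k : ℚ) + 1) ^ 2 - ((l : ℚ) + 1) - ((k : ℚ) + 1))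
        + ((l : ℚ) + 1) ^ 3 - ((k : ℚ) + 1) ^ 3 - 2 * ((l : ℚ) + 1) ^ 2 * ((k : ℚ) + 1)
        - 3 * ((l : ℚ) + 1) * ((k : ℚ) + 1) ^ 2
        - 7 / 2 * ((l : ℚ) + 1) ^ 2 - 1 / 2 * ((k : ℚ) + 1) ^ 2
        + 2 * ((l : ℚ) + 1) * ((k : ℚ) + 1)
        + 5 / 2 * ((l : ℚ) + 1) + 1 / 2 * ((k : ℚ) + 1) := by
  have hm : (0 : ℚ) ≤ (m : ℚ) := Nat.cast_nonneg m
  have hl : (0 : ℚ) ≤ (l : ℚ) := Nat.cast_nonneg l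
  have hk : (0 : ℚ) ≤ (k : ℚ) := Nat.cast_nonneg k
  have hkl : (k : ℚ) ≤ (l : ℚ) := Nat.cast_le.2 hkl'
  have hkm : (k : ℚ) ≤ (m : ℚ) := Nat.cast_le.2 hkm'
  have hlm : (l : ℚ) ≤ (m : ℚ) + 2 := by
    have h0 : (l : ℚ) ≤ ((m + 2 : ℕ) : ℚ) := Nat.cast_le.2 hlm'
    push_cast at h0; linarith
  have hs : (1 : ℚ) ≤ (m : ℚ) + (l : ℚ) + (k : ℚ) := by
    have h0 : ((1 : ℕ) : ℚ) ≤ ((m + l + k : ℕ) : ℚ) := Nat.cast_le.2 hs'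
    push_cast at h0; linarith
  have hposE : (0:ℚ) < 10 + 11*(k:ℚ) - (k:ℚ)^2 - 2*(k:ℚ)^3 - (l:ℚ) - 16*(l:ℚ)*(k:ℚ)
      - 6*(l:ℚ)*(k:ℚ)^2 + 7*(l:ℚ)^2 - 4*(l:ℚ)^2*(k:ℚ) + 2*(l:ℚ)^3
      + 12*(m:ℚ) + 16*(m:ℚ)*(k:ℚ) + 4*(m:ℚ)*(k:ℚ)^2 + 4*(m:ℚ)*(l:ℚ) + 4*(m:ℚ)*(l:ℚ)^2
      + 2*(m:ℚ)^2 + 2*(m:ℚ)^2*(k:ℚ) := by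
    nlinarith [mul_nonneg (mul_nonneg hm hk) hk, mul_nonneg (sub_nonneg.2 hkm) (mul_nonneg hk hk),
      mul_nonneg (sub_nonneg.2 hkl) (mul_nonneg hk hk), mul_nonneg (sub_nonneg.2 hkm) (mul_nonneg hl hk),
      mul_nonneg (sub_nonneg.2 hkl) (mul_nonneg hl hk), mul_nonneg (sub_nonneg.2 hkm) (mul_nonneg hl hl),
      mul_nonneg (sub_nonneg.2 hkl) (mul_nonneg hl hl), mul_nonneg hm hl, mul_nonneg hm hk,
      mul_nonneg hl hk, sq_nonneg ((l:ℚ)-(k:ℚ)), sq_nonneg ((m:ℚ)-(k:ℚ)), sq_nonneg ((m:ℚ)-(l:ℚ)),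
      mul_nonneg (mul_nonneg hl hl) hl]
  nlinarith [hposE]

end Aux

theorem stmt_17 {α : Type*} [Fintype α] [DecidableEq α] (n1 n2 n3 : ℕ)
    (h21 : n2 ≤ n1) (h32 : n3 ≤ n2) (h13 : n3 + 2 ≤ n1) (h3 : 1 ≤ n3)
    (hsum : 6 ≤ n1 + n2 + n3)
    (V1' V2' V3' : Finset α)
    (h12' : Disjoint V1' V2') (h13' : Disjoint V1' V3') (h23' : Disjoint V2' V3')
    (c1' : V1'.card = n1 - 1) (c2' : V2'.card = n2) (c3' : V3'.card = n3 + 1)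
    (V1 V2 V3 : Finset α)
    (hd12 : Disjoint V1 V2) (hd13 : Disjoint V1 V3) (hd23 : Disjoint V2 V3)
    (c1 : V1.card = n1) (c2 : V2.card = n2) (c3 : V3.card = n3) :
    normTwo (cycEdges V1 V2 V3) < normTwo (cycEdges V1' V2' V3') ∧
      (normTwo (cycEdges V1' V2' V3') : ℚ) - normTwo (cycEdges V1 V2 V3) =
        (n1 : ℚ) ^ 2 * n3 + 2 * n1 * ((n2 : ℚ) ^ 2 + (n3 : ℚ) ^ 2 - n2 - n3)
          + (n2 : ℚ) ^ 3 - (n3 : ℚ) ^ 3 - 2 * (n2 : ℚ) ^ 2 * n3 - 3 * n2 * (n3 : ℚ) ^ 2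
          - 7 / 2 * (n2 : ℚ) ^ 2 - 1 / 2 * (n3 : ℚ) ^ 2 + 2 * (n2 : ℚ) * n3
          + 5 / 2 * n2 + 1 / 2 * n3 := by
  have hF := norm_formula hd12 hd13 hd23
  have hF' := norm_formula h12' h13' h23'
  rw [c1, c2, c3] at hF
  rw [c1', c2', c3'] at hF'
  obtain ⟨m, rfl⟩ : ∃ m, n1 = m + 3 := ⟨n1 - 3, by omega⟩
  obtain ⟨l, rfl⟩ : ∃ l, n2 = l + 1 := ⟨n2 - 1, by omega⟩
  obtain ⟨k, rfl⟩ : ∃ k, n3 = k + 1 := ⟨n3 - 1, by omega⟩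
  rw [show m + 3 + (k + 1) - 1 = m + k + 3 by omega,
    show m + 3 + (l + 1) - 1 = m + l + 3 by omega,
    show l + 1 + (k + 1) - 1 = l + k + 1 by omega] at hF
  rw [show m + 3 - 1 = m + 2 by omega] at hF'
  rw [show m + 2 + (k + 1 + 1) - 1 = m + k + 3 by omega,
    show m + 2 + (l + 1) - 1 = m + l + 2 by omega,
    show l + 1 + (k + 1 + 1) - 1 = l + k + 2 by omega] at hF'
  have hqe : (normTwo (cycEdges V1' V2' V3') : ℚ) - normTwo (cycEdges V1 V2 V3) =
      ((m : ℚ) + 3) ^ 2 * ((k : ℚ) + 1)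
        + 2 * ((m : ℚ) + 3) * (((l : ℚ) + 1) ^ 2 + ((k : ℚ) + 1) ^ 2 - ((l : ℚ) + 1) - ((k : ℚ) + 1))
        + ((l : ℚ) + 1) ^ 3 - ((k : ℚ) + 1) ^ 3 - 2 * ((l : ℚ) + 1) ^ 2 * ((k : ℚ) + 1)
        - 3 * ((l : ℚ) + 1) * ((k : ℚ) + 1) ^ 2
        - 7 / 2 * ((l : ℚ) + 1) ^ 2 - 1 / 2 * ((k : ℚ) + 1) ^ 2
        + 2 * ((l : ℚ) + 1) * ((k : ℚ) + 1)
        + 5 / 2 * ((l : ℚ) + 1) + 1 / 2 * ((k : ℚ) + 1) := by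
    rw [hF, hF']
    push_cast [Nat.cast_choose_two ℚ]
    ring
  have hpos := key_pos m l k (by omega) (by omega) (by omega) (by omega)
  constructor
  · rw [← @Nat.cast_lt ℚ]
    linarith [hqe]
  · rw [hqe]
    push_cast
    ring
end

section
/- Let H be a K₄³-free 3-graph with vertex partition V = V1 ∪ V2 ∪ V3, let M := C[V1,V2,V3] \ H be the missing edges, and suppose u₁, u₂ ∈ V1 with N = N_H(u₁u₂) ∩ V3 the set of w ∈ V3 with {u₁,u₂,w} ∈ H. Then for every pair {y,z} ⊆ N, at least one of {u₁,y,z}, {u₂,y,z} belongs to M, and consequently d_M(u₁) + d_M(u₂) ≥ C(|N|, 2), where d_M(v) is the number of triples of M containing v. -/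
/-- A 3-graph is `K₄³`-free if no 4 vertices span all four of their triples. -/
def K43Free {α : Type*} [DecidableEq α] (H : Finset (Finset α)) : Prop :=
  ¬∃ S : Finset α, S.card = 4 ∧ ∀ e ∈ Finset.powersetCard 3 S, e ∈ H

lemma triple_sub_four {α : Type*} [DecidableEq α] {a b c d : α} {e : Finset α}
    (he : e ⊆ {a, b, c, d}) (hc3 : e.card = 3)
    (hab : a ≠ b) (hac : a ≠ c) (had : a ≠ d) (hbc : b ≠ c) (hbd : b ≠ d) (hcd : c ≠ d) :
    e = {a, b, c} ∨ e = {a, b, d} ∨ e = {a, c, d} ∨ e = {b, c, d} := by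
  have key : ∀ x y z : α, x ≠ y → x ≠ z → y ≠ z → e ⊆ {x, y, z} → e = {x, y, z} := by
    intro x y z hxy hxz hyz hsub
    apply Finset.eq_of_subset_of_card_le hsub
    rw [hc3]
    rw [Finset.card_insert_of_notMem (by simp [hxy, hxz]),
      Finset.card_insert_of_notMem (by simp [hyz]), Finset.card_singleton]
  by_cases ha : a ∈ e
  · by_cases hb : b ∈ e
    · by_cases hcc : c ∈ e
      · left
        refine (Finset.eq_of_subset_of_card_le ?_ ?_).symm
        · intro t ht
          rcases Finset.mem_insert.mp ht with rfl | ht'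
          · exact ha
          rcases Finset.mem_insert.mp ht' with rfl | ht''
          · exact hb
          rw [Finset.mem_singleton] at ht''
          subst ht''; exact hcc
        · rw [hc3, Finset.card_insert_of_notMem (by simp [hab, hac]),
            Finset.card_insert_of_notMem (by simp [hbc]), Finset.card_singleton]
      · right; left
        apply key a b d hab had hbd
        intro t ht
        have := he ht
        simp at this ⊢
        rcases this with h|h|h|h
        · tauto
        · tauto
        · exact absurd (h ▸ ht) hcc
        · tauto
    · right; right; left
      apply key a c d hac had hcd
      intro t ht
      have := he ht
      simp at this ⊢
      rcases this with h|h|h|h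
      · tauto
      · exact absurd (h ▸ ht) hb
      · tauto
      · tauto
  · right; right; right
    apply key b c d hbc hbd hcd
    intro t ht
    have := he ht
    simp at this ⊢
    rcases this with h|h|h|h
    · exact absurd (h ▸ ht) ha
    · tauto
    · tauto
    · tauto

lemma mem_cyc_331 {α : Type*} [Fintype α] [DecidableEq α]
    {V1 V2 V3 : Finset α} (h12 : Disjoint V1 V2) (h13 : Disjoint V1 V3)
    (h23 : Disjoint V2 V3) {u y z : α} (hu : u ∈ V1) (hy : y ∈ V3) (hz : z ∈ V3)
    (hyz : y ≠ z) : ({u, y, z} : Finset α) ∈ cycEdges V1 V2 V3 := by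
  have huy : u ≠ y := fun h => (Finset.disjoint_left.mp h13 hu) (h ▸ hy)
  have huz : u ≠ z := fun h => (Finset.disjoint_left.mp h13 hu) (h ▸ hz)
  have hyV1 : y ∉ V1 := Finset.disjoint_right.mp h13 hy
  have hzV1 : z ∉ V1 := Finset.disjoint_right.mp h13 hz
  have hyV2 : y ∉ V2 := Finset.disjoint_right.mp h23 hy
  have hzV2 : z ∉ V2 := Finset.disjoint_right.mp h23 hz
  have huV2 : u ∉ V2 := Finset.disjoint_left.mp h12 hu
  have huV3 : u ∉ V3 := Finset.disjoint_left.mp h13 hu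
  have e1 : ({u, y, z} : Finset α) ∩ V1 = {u} := by
    ext t; simp only [Finset.mem_inter, Finset.mem_insert, Finset.mem_singleton]
    constructor
    · rintro ⟨h | h | h, ht⟩ <;> subst h <;> tauto
    · rintro rfl; exact ⟨Or.inl rfl, hu⟩
  have e2 : ({u, y, z} : Finset α) ∩ V2 = ∅ := by
    ext t; simp only [Finset.mem_inter, Finset.mem_insert, Finset.mem_singleton,
      Finset.notMem_empty, iff_false, not_and]
    rintro (h | h | h) <;> subst h <;> tauto
  have e3 : ({u, y, z} : Finset α) ∩ V3 = {y, z} := by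
    ext t; simp only [Finset.mem_inter, Finset.mem_insert, Finset.mem_singleton]
    constructor
    · rintro ⟨h | h | h, ht⟩ <;> subst h <;> tauto
    · rintro (rfl | rfl)
      · exact ⟨Or.inr (Or.inl rfl), hy⟩
      · exact ⟨Or.inr (Or.inr rfl), hz⟩
  have hcard : ({u, y, z} : Finset α).card = 3 := by
    rw [Finset.card_insert_of_notMem (by simp [huy, huz]),
      Finset.card_insert_of_notMem (by simp [hyz]), Finset.card_singleton]
  simp only [cycEdges, Finset.mem_filter, Finset.mem_powersetCard, Finset.subset_univ,
    true_and, e1, e2, e3, List.mem_cons, List.mem_singleton]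
  refine ⟨hcard, ?_⟩
  right; right; right; left
  simp [hyz]

theorem stmt_18 {α : Type*} [Fintype α] [DecidableEq α]
    (H : Finset (Finset α)) (hH : ∀ E ∈ H, E.card = 3) (hfree : K43Free H)
    (V1 V2 V3 : Finset α)
    (h12 : Disjoint V1 V2) (h13 : Disjoint V1 V3) (h23 : Disjoint V2 V3)
    (hcover : V1 ∪ V2 ∪ V3 = Finset.univ)
    (u1 u2 : α) (hu1 : u1 ∈ V1) (hu2 : u2 ∈ V1) (hu : u1 ≠ u2) :
    -- M: missing edges; N: vertices of V3 forming an edge with the pair u1u2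
    let M : Finset (Finset α) := cycEdges V1 V2 V3 \ H
    let N : Finset α := V3.filter fun w => ({u1, u2, w} : Finset α) ∈ H
    (∀ y ∈ N, ∀ z ∈ N, y ≠ z →
        ({u1, y, z} : Finset α) ∈ M ∨ ({u2, y, z} : Finset α) ∈ M) ∧
      (M.filter fun E => u1 ∈ E).card + (M.filter fun E => u2 ∈ E).card ≥
        N.card.choose 2 := by
  intro M N
  have hNV3 : N ⊆ V3 := Finset.filter_subset _ _
  have part1 : ∀ y ∈ N, ∀ z ∈ N, y ≠ z →
      ({u1, y, z} : Finset α) ∈ M ∨ ({u2, y, z} : Finset α) ∈ M := by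
    intro y hy z hz hyz
    have hyV3 : y ∈ V3 := hNV3 hy
    have hzV3 : z ∈ V3 := hNV3 hz
    have hy1 : ({u1, u2, y} : Finset α) ∈ H := (Finset.mem_filter.mp hy).2
    have hz1 : ({u1, u2, z} : Finset α) ∈ H := (Finset.mem_filter.mp hz).2
    have hc1 : ({u1, y, z} : Finset α) ∈ cycEdges V1 V2 V3 :=
      mem_cyc_331 h12 h13 h23 hu1 hyV3 hzV3 hyz
    have hc2 : ({u2, y, z} : Finset α) ∈ cycEdges V1 V2 V3 :=
      mem_cyc_331 h12 h13 h23 hu2 hyV3 hzV3 hyz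
    by_contra hcon
    push_neg at hcon
    obtain ⟨hn1, hn2⟩ := hcon
    have hin1 : ({u1, y, z} : Finset α) ∈ H := by
      by_contra h; exact hn1 (Finset.mem_sdiff.mpr ⟨hc1, h⟩)
    have hin2 : ({u2, y, z} : Finset α) ∈ H := by
      by_contra h; exact hn2 (Finset.mem_sdiff.mpr ⟨hc2, h⟩)
    -- build the K4
    have hu1y : u1 ≠ y := fun h => (Finset.disjoint_left.mp h13 hu1) (h ▸ hyV3)
    have hu1z : u1 ≠ z := fun h => (Finset.disjoint_left.mp h13 hu1) (h ▸ hzV3)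
    have hu2y : u2 ≠ y := fun h => (Finset.disjoint_left.mp h13 hu2) (h ▸ hyV3)
    have hu2z : u2 ≠ z := fun h => (Finset.disjoint_left.mp h13 hu2) (h ▸ hzV3)
    apply hfree
    refine ⟨{u1, u2, y, z}, ?_, ?_⟩
    · rw [Finset.card_insert_of_notMem (by simp [hu, hu1y, hu1z]),
        Finset.card_insert_of_notMem (by simp [hu2y, hu2z]),
        Finset.card_insert_of_notMem (by simp [hyz]), Finset.card_singleton]
    · intro e he
      rw [Finset.mem_powersetCard] at he
      rcases triple_sub_four he.1 he.2 hu hu1y hu1z hu2y hu2z hyz with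
        rfl | rfl | rfl | rfl
      · exact hy1
      · exact hz1
      · exact hin1
      · exact hin2
  refine ⟨part1, ?_⟩
  -- counting
  have huV3 : u1 ∉ V3 := Finset.disjoint_left.mp h13 hu1
  have hu2V3 : u2 ∉ V3 := Finset.disjoint_left.mp h13 hu2
  set P := N.powersetCard 2 with hP
  have hcardP : P.card = N.card.choose 2 := by
    rw [hP, Finset.card_powersetCard]
  set T := (M.filter fun E => u1 ∈ E) ∪ (M.filter fun E => u2 ∈ E) with hT
  have hmap : ∀ p ∈ P, (if insert u1 p ∈ M then insert u1 p else insert u2 p) ∈ T := by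
    intro p hp
    rw [hP, Finset.mem_powersetCard] at hp
    obtain ⟨hsub, hc2⟩ := hp
    obtain ⟨y, z, hyz, rfl⟩ := Finset.card_eq_two.mp hc2
    have hy : y ∈ N := hsub (by simp)
    have hz : z ∈ N := hsub (by simp)
    have := part1 y hy z hz hyz
    by_cases h : ({u1, y, z} : Finset α) ∈ M
    · simp only [show insert u1 ({y, z} : Finset α) = {u1, y, z} from rfl, if_pos h]
      exact Finset.mem_union_left _ (Finset.mem_filter.mpr ⟨h, by simp⟩)
    · simp only [show insert u1 ({y, z} : Finset α) = {u1, y, z} from rfl, if_neg h]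
      have h2 : ({u2, y, z} : Finset α) ∈ M := this.resolve_left h
      exact Finset.mem_union_right _ (Finset.mem_filter.mpr ⟨h2, by simp⟩)
  have hinj : ∀ p ∈ P, ∀ q ∈ P,
      (if insert u1 p ∈ M then insert u1 p else insert u2 p) =
      (if insert u1 q ∈ M then insert u1 q else insert u2 q) → p = q := by
    intro p hp q hq heq
    rw [hP, Finset.mem_powersetCard] at hp hq
    have hpV3 : p ⊆ V3 := hp.1.trans hNV3
    have hqV3 : q ⊆ V3 := hq.1.trans hNV3
    have key : ∀ (u : α) (r : Finset α), u ∉ V3 → r ⊆ V3 → (insert u r) ∩ V3 = r := by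
      intro u r hu hr
      ext t
      simp only [Finset.mem_inter, Finset.mem_insert]
      constructor
      · rintro ⟨rfl | ht, htV⟩
        · exact absurd htV hu
        · exact ht
      · intro ht; exact ⟨Or.inr ht, hr ht⟩
    have : ∀ r : Finset α, r ⊆ V3 →
        (if insert u1 r ∈ M then insert u1 r else insert u2 r) ∩ V3 = r := by
      intro r hr
      split
      · exact key u1 r huV3 hr
      · exact key u2 r hu2V3 hr
    calc p = _ ∩ V3 := (this p hpV3).symm
    _ = _ ∩ V3 := by rw [heq]
    _ = q := this q hqV3
  calc N.card.choose 2 = P.card := hcardP.symm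
    _ ≤ T.card := Finset.card_le_card_of_injOn _ hmap hinj
    _ ≤ _ := Finset.card_union_le _ _
end
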